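/- arXiv:2106.02915 — 3 statements merged into one kernel-verified Lean document; each statement's English description precedes it below -/
import Mathlib

section
/- Let σ : {0,1,…,m−1} → {1,2,…,m} be a bijection with CISS(σ) = (c_1, i_1, …, c_l, i_l), and set c := e_{m−c_1}^T ⊗ C if c_1 > 0 and c := e_m^T ⊗ C if c_1 = 0. Then the higher order system is observable if and only if the linearized system is observable; that is, the (n+r)×n stacked matrix [P(λ); C] has rank n for every λ ∈ ℂ if and only if the (nm+r)×nm stacked matrix [L_σ(λ); c] has rank nm for every λ ∈ ℂ. -/
open Matrix
open Fin.NatCast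

noncomputable section

/-- The matrix polynomial `P(λ) = A_0 + λ A_1 + ⋯ + λ^m A_m` evaluated at `lam`. -/
def PEval (m n : ℕ) (A : Fin (m + 1) → Matrix (Fin n) (Fin n) ℂ) (lam : ℂ) :
    Matrix (Fin n) (Fin n) ℂ :=
  ∑ j : Fin (m + 1), lam ^ (j : ℕ) • A j

/-- `P` is regular: `det P(λ)` is not identically zero. -/
def Regular (m n : ℕ) (A : Fin (m + 1) → Matrix (Fin n) (Fin n) ℂ) : Prop :=
  ∃ lam : ℂ, (PEval m n A lam).det ≠ 0

/-- The Fiedler matrix `M_i` of `P`, an `nm × nm` matrix indexed blockwise by `Fin m × Fin n`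
(block row `0` is the top block row). -/
def FM (m n : ℕ) (A : Fin (m + 1) → Matrix (Fin n) (Fin n) ℂ) (i : ℕ) :
    Matrix (Fin m × Fin n) (Fin m × Fin n) ℂ :=
  Matrix.of fun p q =>
    (if i = 0 then
      if p.1 = q.1 then
        (if (p.1 : ℕ) = m - 1 then -A 0 else (1 : Matrix (Fin n) (Fin n) ℂ)) else 0
    else if i = m then
      if p.1 = q.1 then (if (p.1 : ℕ) = 0 then A (m : Fin (m + 1)) else 1) else 0
    else
      if (p.1 : ℕ) = m - i - 1 ∧ (q.1 : ℕ) = m - i - 1 then -A (i : Fin (m + 1))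
      else if (p.1 : ℕ) = m - i - 1 ∧ (q.1 : ℕ) = m - i then 1
      else if (p.1 : ℕ) = m - i ∧ (q.1 : ℕ) = m - i - 1 then 1
      else if (p.1 : ℕ) = m - i ∧ (q.1 : ℕ) = m - i then 0
      else if p.1 = q.1 then 1 else 0) p.2 q.2

/-- `e_j ⊗ B` (with `j` 1-indexed): the `nm × r` block column matrix with `B` in block row `j`. -/
def eB (m n r : ℕ) (j : ℕ) (B : Matrix (Fin n) (Fin r) ℂ) :
    Matrix (Fin m × Fin n) (Fin r) ℂ :=
  Matrix.of fun p q => if (p.1 : ℕ) + 1 = j then B p.2 q else 0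

/-- `e_j^T ⊗ C` (with `j` 1-indexed): the `r × nm` block row matrix with `C` in block column `j`. -/
def eC (m n r : ℕ) (j : ℕ) (C : Matrix (Fin r) (Fin n) ℂ) :
    Matrix (Fin r) (Fin m × Fin n) ℂ :=
  Matrix.of fun q p => if (p.1 : ℕ) + 1 = j then C q p.2 else 0

/-- `M_σ = M_{σ⁻¹(1)} M_{σ⁻¹(2)} ⋯ M_{σ⁻¹(m)}` (here positions are 0-indexed: `σ i` is the
0-indexed position of the factor `M_i`). -/
def Mperm (m n : ℕ) (A : Fin (m + 1) → Matrix (Fin n) (Fin n) ℂ) (σ : Equiv.Perm (Fin m)) :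
    Matrix (Fin m × Fin n) (Fin m × Fin n) ℂ :=
  (List.ofFn fun j : Fin m => FM m n A ((σ.symm j : Fin m) : ℕ)).prod

/-- The Fiedler pencil `L_σ(λ) = λ M_m − M_σ` of `P` evaluated at `lam`. -/
def LP (m n : ℕ) (A : Fin (m + 1) → Matrix (Fin n) (Fin n) ℂ) (σ : Equiv.Perm (Fin m))
    (lam : ℂ) : Matrix (Fin m × Fin n) (Fin m × Fin n) ℂ :=
  lam • FM m n A m - Mperm m n A σ

/-- `σ` has a consecution at `d` (i.e. `σ(d) < σ(d+1)`). -/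
def ConsAt (m : ℕ) (σ : Equiv.Perm (Fin m)) (d : ℕ) : Prop :=
  ∃ h : d + 1 < m, (σ ⟨d, Nat.lt_of_succ_lt h⟩ : ℕ) < (σ ⟨d + 1, h⟩ : ℕ)

/-- `σ` has an inversion at `d` (i.e. `σ(d) > σ(d+1)`). -/
def InvAt (m : ℕ) (σ : Equiv.Perm (Fin m)) (d : ℕ) : Prop :=
  ∃ h : d + 1 < m, (σ ⟨d + 1, h⟩ : ℕ) < (σ ⟨d, Nat.lt_of_succ_lt h⟩ : ℕ)

/-- `c1` is the number of initial consecutive consecutions of `σ` (the first entry of CISS(σ)). -/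
def IsC1 (m : ℕ) (σ : Equiv.Perm (Fin m)) (c1 : ℕ) : Prop :=
  (∀ d < c1, ConsAt m σ d) ∧ ¬ ConsAt m σ c1

/-- `i1` is the number of consecutive inversions of `σ` at `c1, …, c1 + i1 − 1`
(the second entry of CISS(σ)). -/
def IsI1 (m : ℕ) (σ : Equiv.Perm (Fin m)) (c1 i1 : ℕ) : Prop :=
  (∀ d, c1 ≤ d → d < c1 + i1 → InvAt m σ d) ∧ ¬ InvAt m σ (c1 + i1)

/-- The system matrix `S(λ) = [[−P(λ), B], [C, D]]` evaluated at `lam`. -/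
def SMat (m n r : ℕ) (A : Fin (m + 1) → Matrix (Fin n) (Fin n) ℂ)
    (B : Matrix (Fin n) (Fin r) ℂ) (C : Matrix (Fin r) (Fin n) ℂ) (D : Matrix (Fin r) (Fin r) ℂ)
    (lam : ℂ) : Matrix (Fin n ⊕ Fin r) (Fin n ⊕ Fin r) ℂ :=
  Matrix.fromBlocks (-(PEval m n A lam)) B C D

/-- The Fiedler pencil `𝕊_σ(λ)` of the system matrix, evaluated at `lam`:
`[[−L_σ(λ), e_m ⊗ B], [e_{m−c1}^T ⊗ C, D]]` if `c1 > 0`, and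
`[[−L_σ(λ), e_{m−i1} ⊗ B], [e_m^T ⊗ C, D]]` if `c1 = 0`. -/
def SP (m n r : ℕ) (A : Fin (m + 1) → Matrix (Fin n) (Fin n) ℂ)
    (B : Matrix (Fin n) (Fin r) ℂ) (C : Matrix (Fin r) (Fin n) ℂ) (D : Matrix (Fin r) (Fin r) ℂ)
    (σ : Equiv.Perm (Fin m)) (c1 i1 : ℕ) (lam : ℂ) :
    Matrix ((Fin m × Fin n) ⊕ Fin r) ((Fin m × Fin n) ⊕ Fin r) ℂ :=
  if 0 < c1 then
    Matrix.fromBlocks (-(LP m n A σ lam)) (eB m n r m B) (eC m n r (m - c1) C) D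
  else
    Matrix.fromBlocks (-(LP m n A σ lam)) (eB m n r (m - i1) B) (eC m n r m C) D

/-- The Fiedler matrices `𝕄_i` of the system matrix `S(λ)`. -/
def SFM (m n r : ℕ) (A : Fin (m + 1) → Matrix (Fin n) (Fin n) ℂ)
    (B : Matrix (Fin n) (Fin r) ℂ) (C : Matrix (Fin r) (Fin n) ℂ) (D : Matrix (Fin r) (Fin r) ℂ)
    (i : ℕ) : Matrix ((Fin m × Fin n) ⊕ Fin r) ((Fin m × Fin n) ⊕ Fin r) ℂ :=
  if i = 0 then Matrix.fromBlocks (FM m n A 0) (-(eB m n r m B)) (-(eC m n r m C)) (-D)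
  else if i = m then Matrix.fromBlocks (FM m n A m) 0 0 0
  else Matrix.fromBlocks (FM m n A i) 0 0 1

/-- `w = (w0, w1)` is a proper permutation of `{0, 1, …, m}`. -/
def ProperPerm (m : ℕ) (w0 w1 : List ℕ) : Prop :=
  List.Perm (w0 ++ w1) (List.range (m + 1)) ∧ 0 ∈ w0 ∧ m ∈ w1

/-- `M̂_{w0}`: the product of the Fiedler matrices of `P` in the order listed in `w0`. -/
def hatM0 (m n : ℕ) (A : Fin (m + 1) → Matrix (Fin n) (Fin n) ℂ) (w0 : List ℕ) :
    Matrix (Fin m × Fin n) (Fin m × Fin n) ℂ :=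
  (w0.map (FM m n A)).prod

/-- `M̂_{w1} = M_{i1}⁻¹ ⋯ M_{ip}⁻¹ M_m M_{j1}⁻¹ ⋯ M_{jq}⁻¹` for `w1 = (i1,…,ip,m,j1,…,jq)`. -/
def hatM1 (m n : ℕ) (A : Fin (m + 1) → Matrix (Fin n) (Fin n) ℂ) (w1 : List ℕ) :
    Matrix (Fin m × Fin n) (Fin m × Fin n) ℂ :=
  (w1.map (fun i => if i = m then FM m n A m else (FM m n A i)⁻¹)).prod

/-- The PGF pencil `K_w(λ) = λ M̂_{w1} − M̂_{w0}` of `P`, evaluated at `lam`. -/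
def KP (m n : ℕ) (A : Fin (m + 1) → Matrix (Fin n) (Fin n) ℂ) (w0 w1 : List ℕ) (lam : ℂ) :
    Matrix (Fin m × Fin n) (Fin m × Fin n) ℂ :=
  lam • hatM1 m n A w1 - hatM0 m n A w0

/-- `𝕄̂_{w0}` for the system Fiedler matrices. -/
def hatS0 (m n r : ℕ) (A : Fin (m + 1) → Matrix (Fin n) (Fin n) ℂ)
    (B : Matrix (Fin n) (Fin r) ℂ) (C : Matrix (Fin r) (Fin n) ℂ) (D : Matrix (Fin r) (Fin r) ℂ)
    (w0 : List ℕ) : Matrix ((Fin m × Fin n) ⊕ Fin r) ((Fin m × Fin n) ⊕ Fin r) ℂ :=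
  (w0.map (SFM m n r A B C D)).prod

/-- `𝕄̂_{w1}` for the system Fiedler matrices. -/
def hatS1 (m n r : ℕ) (A : Fin (m + 1) → Matrix (Fin n) (Fin n) ℂ)
    (B : Matrix (Fin n) (Fin r) ℂ) (C : Matrix (Fin r) (Fin n) ℂ) (D : Matrix (Fin r) (Fin r) ℂ)
    (w1 : List ℕ) : Matrix ((Fin m × Fin n) ⊕ Fin r) ((Fin m × Fin n) ⊕ Fin r) ℂ :=
  (w1.map (fun i => if i = m then SFM m n r A B C D m else (SFM m n r A B C D i)⁻¹)).prod

/-- The PGF pencil `𝕂_w(λ) = λ 𝕄̂_{w1} − 𝕄̂_{w0}` of `G`, evaluated at `lam`. -/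
def SKP (m n r : ℕ) (A : Fin (m + 1) → Matrix (Fin n) (Fin n) ℂ)
    (B : Matrix (Fin n) (Fin r) ℂ) (C : Matrix (Fin r) (Fin n) ℂ) (D : Matrix (Fin r) (Fin r) ℂ)
    (w0 w1 : List ℕ) (lam : ℂ) :
    Matrix ((Fin m × Fin n) ⊕ Fin r) ((Fin m × Fin n) ⊕ Fin r) ℂ :=
  lam • hatS1 m n r A B C D w1 - hatS0 m n r A B C D w0

/-- The index tuple `w` has a consecution at `d`. -/
def LCons (w : List ℕ) (d : ℕ) : Prop :=
  d ∈ w ∧ d + 1 ∈ w ∧ w.idxOf d < w.idxOf (d + 1)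

/-- The index tuple `w` has an inversion at `d`. -/
def LInv (w : List ℕ) (d : ℕ) : Prop :=
  d ∈ w ∧ d + 1 ∈ w ∧ w.idxOf (d + 1) < w.idxOf d

/-- `CIP(w) = (c0, i0)`. -/
def IsCIP (w : List ℕ) (c0 i0 : ℕ) : Prop :=
  ((∀ d < c0, LCons w d) ∧ ¬ LCons w c0) ∧ ((∀ d < i0, LInv w d) ∧ ¬ LInv w i0)

/-- Block index of an index of an `(nm+r) × (nm+r)` matrix: the first `m` (diagonal) blocks
have size `n`, the last one size `r`. -/
def sIdx (m n r : ℕ) : (Fin m × Fin n) ⊕ Fin r → ℕ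
  | Sum.inl p => p.1
  | Sum.inr _ => m

/-- An `(nm+r) × (nm+r)` matrix has block bandwidth `k` (e.g. `k = 1`: block tridiagonal,
`k = 2`: block pentadiagonal). -/
def BlockBandS (m n r : ℕ) (k : ℕ)
    (M : Matrix ((Fin m × Fin n) ⊕ Fin r) ((Fin m × Fin n) ⊕ Fin r) ℂ) : Prop :=
  ∀ x y, (sIdx m n r x + k < sIdx m n r y ∨ sIdx m n r y + k < sIdx m n r x) → M x y = 0

/-- An `nm × nm` matrix has block bandwidth `k`. -/
def BlockBandP (m n : ℕ) (k : ℕ) (M : Matrix (Fin m × Fin n) (Fin m × Fin n) ℂ) : Prop :=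
  ∀ x y : Fin m × Fin n, ((x.1 : ℕ) + k < (y.1 : ℕ) ∨ (y.1 : ℕ) + k < (x.1 : ℕ)) → M x y = 0

/-- The degree-`k` Horner shift `P_k(λ) = A_{m−k} + λ A_{m−k+1} + ⋯ + λ^k A_m`. -/
def Horner (m n : ℕ) (A : Fin (m + 1) → Matrix (Fin n) (Fin n) ℂ) (k : Fin (m + 1)) (lam : ℂ) :
    Matrix (Fin n) (Fin n) ℂ :=
  ∑ j : Fin ((k : ℕ) + 1),
    lam ^ (j : ℕ) • A ⟨m - (k : ℕ) + (j : ℕ), by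
      have h1 := j.isLt; have h2 := k.isLt; omega⟩

/-- `N_1`: the zero-degree coefficient of the first companion pencil of `P`. -/
def N1 (m n : ℕ) (A : Fin (m + 1) → Matrix (Fin n) (Fin n) ℂ) :
    Matrix (Fin m × Fin n) (Fin m × Fin n) ℂ :=
  Matrix.of fun p q =>
    (if (p.1 : ℕ) = 0 then -A ((m - 1 - (q.1 : ℕ) : ℕ) : Fin (m + 1))
     else if (p.1 : ℕ) = (q.1 : ℕ) + 1 then (1 : Matrix (Fin n) (Fin n) ℂ)
     else 0) p.2 q.2

/-- `N_2`: the zero-degree coefficient of the second companion pencil of `P`. -/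
def N2 (m n : ℕ) (A : Fin (m + 1) → Matrix (Fin n) (Fin n) ℂ) :
    Matrix (Fin m × Fin n) (Fin m × Fin n) ℂ :=
  Matrix.of fun p q =>
    (if (q.1 : ℕ) = 0 then -A ((m - 1 - (p.1 : ℕ) : ℕ) : Fin (m + 1))
     else if (q.1 : ℕ) = (p.1 : ℕ) + 1 then (1 : Matrix (Fin n) (Fin n) ℂ)
     else 0) p.2 q.2

/-- The first companion form `C_1(λ) = [[−L_1(λ), e_1 ⊗ B], [e_m^T ⊗ C, D]]` of `S`. -/
def C1P (m n r : ℕ) (A : Fin (m + 1) → Matrix (Fin n) (Fin n) ℂ)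
    (B : Matrix (Fin n) (Fin r) ℂ) (C : Matrix (Fin r) (Fin n) ℂ) (D : Matrix (Fin r) (Fin r) ℂ)
    (lam : ℂ) : Matrix ((Fin m × Fin n) ⊕ Fin r) ((Fin m × Fin n) ⊕ Fin r) ℂ :=
  Matrix.fromBlocks (-(lam • FM m n A m - N1 m n A)) (eB m n r 1 B) (eC m n r m C) D

/-- The second companion form `C_2(λ) = [[−L_2(λ), e_m ⊗ B], [e_1^T ⊗ C, D]]` of `S`. -/
def C2P (m n r : ℕ) (A : Fin (m + 1) → Matrix (Fin n) (Fin n) ℂ)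
    (B : Matrix (Fin n) (Fin r) ℂ) (C : Matrix (Fin r) (Fin n) ℂ) (D : Matrix (Fin r) (Fin r) ℂ)
    (lam : ℂ) : Matrix ((Fin m × Fin n) ⊕ Fin r) ((Fin m × Fin n) ⊕ Fin r) ℂ :=
  Matrix.fromBlocks (-(lam • FM m n A m - N2 m n A)) (eB m n r m B) (eC m n r 1 C) D

attribute [local instance 0] Classical.propDecidable

open Matrix
noncomputable section
attribute [local instance] Classical.propDecidable

namespace S4
variable {m n : ℕ}

def blk (m : ℕ) (hm : 0 < m) (e : ℕ) : Fin m := ⟨m - 1 - e, by omega⟩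

lemma blk_val (hm : 0 < m) (e : ℕ) : ((blk m hm e : Fin m) : ℕ) = m - 1 - e := rfl

def Bl (hm : 0 < m) (v : Fin m × Fin n → ℂ) (e : ℕ) : Fin n → ℂ :=
  fun s => v (blk m hm e, s)

lemma mulVec_blocks (Ebl : Fin m → Fin m → Matrix (Fin n) (Fin n) ℂ)
    (w : Fin m × Fin n → ℂ) (p : Fin m) (s : Fin n) :
    ((Matrix.of fun p q => (Ebl p.1 q.1) p.2 q.2 :
        Matrix (Fin m × Fin n) (Fin m × Fin n) ℂ) *ᵥ w) (p, s)
      = ∑ q1 : Fin m, (Ebl p q1 *ᵥ fun t => w (q1, t)) s := by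
  simp [Matrix.mulVec, dotProduct, Fintype.sum_prod_type]

section FMact
variable (A : Fin (m+1) → Matrix (Fin n) (Fin n) ℂ)

set_option maxHeartbeats 1000000 in
lemma FM0_mulVec (hm : 0 < m) (w : Fin m × Fin n → ℂ) (p : Fin m) (s : Fin n) :
    (FM m n A 0 *ᵥ w) (p, s)
      = if (p : ℕ) = m - 1 then ((-A 0) *ᵥ Bl hm w 0) s else w (p, s) := by
  have h0 : FM m n A 0 = Matrix.of fun p q : Fin m × Fin n =>
      ((fun p1 q1 : Fin m => if p1 = q1 then
        (if (p1 : ℕ) = m - 1 then -A 0 else (1 : Matrix (Fin n) (Fin n) ℂ)) else 0) p.1 q.1)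
        p.2 q.2 := by
    unfold FM; simp
  rw [h0, mulVec_blocks (fun p1 q1 : Fin m => if p1 = q1 then
    (if (p1 : ℕ) = m - 1 then -A 0 else (1 : Matrix (Fin n) (Fin n) ℂ)) else 0)]
  have : ∀ q1 : Fin m,
      ((if p = q1 then (if (p : ℕ) = m - 1 then -A 0 else (1 : Matrix (Fin n) (Fin n) ℂ))
          else 0) *ᵥ fun t => w (q1, t)) s
        = if q1 = p then ((if (p : ℕ) = m - 1 then -A 0 else 1) *ᵥ fun t => w (q1, t)) s
          else 0 := by
    intro q1
    by_cases h : p = q1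
    · subst h; simp
    · rw [if_neg h, if_neg (Ne.symm h)]; simp
  rw [Finset.sum_congr rfl fun q1 _ => this q1, Finset.sum_ite_eq' Finset.univ p]
  simp only [Finset.mem_univ, if_true]
  by_cases h : (p : ℕ) = m - 1
  · rw [if_pos h, if_pos h]
    have hp : p = blk m hm 0 := by
      apply Fin.ext; simp [blk_val, h]
    rw [hp]; rfl
  · rw [if_neg h, if_neg h, Matrix.one_mulVec]

set_option maxHeartbeats 1000000 in
lemma FMm_mulVec (hm : 0 < m) (w : Fin m × Fin n → ℂ) (p : Fin m) (s : Fin n) :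
    (FM m n A m *ᵥ w) (p, s)
      = if (p : ℕ) = 0 then (A (m : Fin (m+1)) *ᵥ Bl hm w (m-1)) s else w (p, s) := by
  have h0 : FM m n A m = Matrix.of fun p q : Fin m × Fin n =>
      ((fun p1 q1 : Fin m => if p1 = q1 then
        (if (p1 : ℕ) = 0 then A (m : Fin (m+1)) else (1 : Matrix (Fin n) (Fin n) ℂ)) else 0)
          p.1 q.1) p.2 q.2 := by
    unfold FM
    have : ¬ (m = 0) := by omega
    simp [this]
  rw [h0, mulVec_blocks (fun p1 q1 : Fin m => if p1 = q1 then
    (if (p1 : ℕ) = 0 then A (m : Fin (m+1)) else (1 : Matrix (Fin n) (Fin n) ℂ)) else 0)]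
  have : ∀ q1 : Fin m,
      ((if p = q1 then (if (p : ℕ) = 0 then A (m : Fin (m+1)) else (1 : Matrix (Fin n) (Fin n) ℂ))
          else 0) *ᵥ fun t => w (q1, t)) s
        = if q1 = p then ((if (p : ℕ) = 0 then A (m : Fin (m+1)) else 1) *ᵥ fun t => w (q1, t)) s
          else 0 := by
    intro q1
    by_cases h : p = q1
    · subst h; simp
    · rw [if_neg h, if_neg (Ne.symm h)]; simp
  rw [Finset.sum_congr rfl fun q1 _ => this q1, Finset.sum_ite_eq' Finset.univ p]
  simp only [Finset.mem_univ, if_true]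
  by_cases h : (p : ℕ) = 0
  · rw [if_pos h, if_pos h]
    have hp : p = blk m hm (m-1) := by
      apply Fin.ext; simp [blk_val]; omega
    rw [hp]; rfl
  · rw [if_neg h, if_neg h, Matrix.one_mulVec]

end FMact
end S4

namespace S4
section FMmid
variable {m n : ℕ} (A : Fin (m+1) → Matrix (Fin n) (Fin n) ℂ)

set_option maxHeartbeats 1000000 in
lemma FMmid_mulVec (hm : 0 < m) {i : ℕ} (h1 : 0 < i) (h2 : i < m)
    (w : Fin m × Fin n → ℂ) (p : Fin m) (s : Fin n) :
    (FM m n A i *ᵥ w) (p, s)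
      = if (p : ℕ) = m - i - 1 then
          ((-A (i : Fin (m+1))) *ᵥ Bl hm w i) s + Bl hm w (i-1) s
        else if (p : ℕ) = m - i then Bl hm w i s
        else w (p, s) := by
  have hi0 : ¬ (i = 0) := by omega
  have him : ¬ (i = m) := by omega
  have h0 : FM m n A i = Matrix.of fun p q : Fin m × Fin n =>
      ((fun p1 q1 : Fin m =>
        if (p1 : ℕ) = m - i - 1 ∧ (q1 : ℕ) = m - i - 1 then -A (i : Fin (m+1))
        else if (p1 : ℕ) = m - i - 1 ∧ (q1 : ℕ) = m - i then 1
        else if (p1 : ℕ) = m - i ∧ (q1 : ℕ) = m - i - 1 then 1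
        else if (p1 : ℕ) = m - i ∧ (q1 : ℕ) = m - i then 0
        else if p1 = q1 then (1 : Matrix (Fin n) (Fin n) ℂ) else 0) p.1 q.1) p.2 q.2 := by
    unfold FM; simp [hi0, him]
  rw [h0, mulVec_blocks (fun p1 q1 : Fin m =>
        if (p1 : ℕ) = m - i - 1 ∧ (q1 : ℕ) = m - i - 1 then -A (i : Fin (m+1))
        else if (p1 : ℕ) = m - i - 1 ∧ (q1 : ℕ) = m - i then 1
        else if (p1 : ℕ) = m - i ∧ (q1 : ℕ) = m - i - 1 then 1
        else if (p1 : ℕ) = m - i ∧ (q1 : ℕ) = m - i then 0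
        else if p1 = q1 then (1 : Matrix (Fin n) (Fin n) ℂ) else 0)]
  have hbi : ((blk m hm i : Fin m) : ℕ) = m - i - 1 := by rw [blk_val]; omega
  have hbi1 : ((blk m hm (i-1) : Fin m) : ℕ) = m - i := by rw [blk_val]; omega
  have hne : (m : ℕ) - i - 1 ≠ m - i := by omega
  have hq_top : ∀ q1 : Fin m, ((q1 : ℕ) = m - i - 1) ↔ q1 = blk m hm i := by
    intro q1; rw [Fin.ext_iff, hbi]
  have hq_bot : ∀ q1 : Fin m, ((q1 : ℕ) = m - i) ↔ q1 = blk m hm (i-1) := by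
    intro q1; rw [Fin.ext_iff, hbi1]
  by_cases hp1 : (p : ℕ) = m - i - 1
  · rw [if_pos hp1]
    have step : ∀ q1 : Fin m,
        ((if (p : ℕ) = m - i - 1 ∧ (q1 : ℕ) = m - i - 1 then -A (i : Fin (m+1))
          else if (p : ℕ) = m - i - 1 ∧ (q1 : ℕ) = m - i then 1
          else if (p : ℕ) = m - i ∧ (q1 : ℕ) = m - i - 1 then 1
          else if (p : ℕ) = m - i ∧ (q1 : ℕ) = m - i then 0
          else if p = q1 then (1 : Matrix (Fin n) (Fin n) ℂ) else 0) *ᵥ fun t => w (q1, t)) s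
        = (if q1 = blk m hm i then ((-A (i : Fin (m+1))) *ᵥ fun t => w (q1, t)) s else 0)
          + (if q1 = blk m hm (i-1) then ((1 : Matrix (Fin n) (Fin n) ℂ) *ᵥ fun t => w (q1, t)) s else 0) := by
      intro q1
      by_cases hq1 : (q1 : ℕ) = m - i - 1
      · rw [if_pos ⟨hp1, hq1⟩, if_pos ((hq_top q1).mp hq1)]
        rw [if_neg (by rw [← hq_bot q1]; omega)]
        ring
      · rw [if_neg (by tauto), if_neg ((hq_top q1).not.mp hq1)]
        by_cases hq2 : (q1 : ℕ) = m - i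
        · rw [if_pos ⟨hp1, hq2⟩, if_pos ((hq_bot q1).mp hq2)]; ring
        · rw [if_neg (by tauto), if_neg (by omega), if_neg (by omega),
            if_neg (by intro h; subst h; omega), if_neg ((hq_bot q1).not.mp hq2)]
          simp
    rw [Finset.sum_congr rfl fun q1 _ => step q1, Finset.sum_add_distrib,
      Finset.sum_ite_eq' Finset.univ, Finset.sum_ite_eq' Finset.univ]
    simp only [Finset.mem_univ, if_true, Matrix.one_mulVec]
    rfl
  · rw [if_neg hp1]
    by_cases hp2 : (p : ℕ) = m - i
    · rw [if_pos hp2]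
      have step : ∀ q1 : Fin m,
          ((if (p : ℕ) = m - i - 1 ∧ (q1 : ℕ) = m - i - 1 then -A (i : Fin (m+1))
            else if (p : ℕ) = m - i - 1 ∧ (q1 : ℕ) = m - i then 1
            else if (p : ℕ) = m - i ∧ (q1 : ℕ) = m - i - 1 then 1
            else if (p : ℕ) = m - i ∧ (q1 : ℕ) = m - i then 0
            else if p = q1 then (1 : Matrix (Fin n) (Fin n) ℂ) else 0) *ᵥ fun t => w (q1, t)) s
          = if q1 = blk m hm i then ((1 : Matrix (Fin n) (Fin n) ℂ) *ᵥ fun t => w (q1, t)) s else 0 := by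
        intro q1
        rw [if_neg (by tauto), if_neg (by tauto)]
        by_cases hq1 : (q1 : ℕ) = m - i - 1
        · rw [if_pos ⟨hp2, hq1⟩, if_pos ((hq_top q1).mp hq1)]
        · rw [if_neg (by tauto), if_neg ((hq_top q1).not.mp hq1)]
          by_cases hq2 : (q1 : ℕ) = m - i
          · rw [if_pos ⟨hp2, hq2⟩]; simp
          · rw [if_neg (by tauto), if_neg (by intro h; subst h; omega)]
            simp
      rw [Finset.sum_congr rfl fun q1 _ => step q1, Finset.sum_ite_eq' Finset.univ]
      simp only [Finset.mem_univ, if_true, Matrix.one_mulVec]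
      rfl
    · rw [if_neg hp2]
      have step : ∀ q1 : Fin m,
          ((if (p : ℕ) = m - i - 1 ∧ (q1 : ℕ) = m - i - 1 then -A (i : Fin (m+1))
            else if (p : ℕ) = m - i - 1 ∧ (q1 : ℕ) = m - i then 1
            else if (p : ℕ) = m - i ∧ (q1 : ℕ) = m - i - 1 then 1
            else if (p : ℕ) = m - i ∧ (q1 : ℕ) = m - i then 0
            else if p = q1 then (1 : Matrix (Fin n) (Fin n) ℂ) else 0) *ᵥ fun t => w (q1, t)) s
          = if q1 = p then ((1 : Matrix (Fin n) (Fin n) ℂ) *ᵥ fun t => w (q1, t)) s else 0 := by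
        intro q1
        rw [if_neg (by tauto), if_neg (by tauto), if_neg (by tauto), if_neg (by tauto)]
        by_cases h : p = q1
        · subst h; simp
        · rw [if_neg h, if_neg (Ne.symm h)]; simp
      rw [Finset.sum_congr rfl fun q1 _ => step q1, Finset.sum_ite_eq' Finset.univ]
      simp only [Finset.mem_univ, if_true, Matrix.one_mulVec]

end FMmid
end S4

namespace S4
section Seqs
variable {m n : ℕ} (hm : 0 < m) (σ : Equiv.Perm (Fin m))
  (A : Fin (m+1) → Matrix (Fin n) (Fin n) ℂ) (lam : ℂ) (v : Fin m × Fin n → ℂ)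

def snat (j : ℕ) : ℕ := if h : j < m then ((σ ⟨j, h⟩ : Fin m) : ℕ) else 0

lemma snat_lt (hm : 0 < m) (j : ℕ) : snat σ j < m := by
  unfold snat; split
  · exact (σ _).isLt
  · omega

lemma snat_inj {j j' : ℕ} (hj : j < m) (hj' : j' < m) (h : snat σ j = snat σ j') : j = j' := by
  unfold snat at h
  rw [dif_pos hj, dif_pos hj'] at h
  have := σ.injective (Fin.ext h)
  simpa using this

lemma consat_iff (i : ℕ) : ConsAt m σ i ↔ i + 1 < m ∧ snat σ i < snat σ (i+1) := by
  unfold ConsAt snat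
  constructor
  · rintro ⟨h, hlt⟩
    exact ⟨h, by rw [dif_pos (Nat.lt_of_succ_lt h), dif_pos h]; exact hlt⟩
  · rintro ⟨h, hlt⟩
    exact ⟨h, by rw [dif_pos (Nat.lt_of_succ_lt h), dif_pos h] at hlt; exact hlt⟩

lemma invat_iff (i : ℕ) : InvAt m σ i ↔ i + 1 < m ∧ snat σ (i+1) < snat σ i := by
  unfold InvAt snat
  constructor
  · rintro ⟨h, hlt⟩
    exact ⟨h, by rw [dif_pos (Nat.lt_of_succ_lt h), dif_pos h]; exact hlt⟩
  · rintro ⟨h, hlt⟩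
    exact ⟨h, by rw [dif_pos (Nat.lt_of_succ_lt h), dif_pos h] at hlt; exact hlt⟩

lemma cons_or_inv {i : ℕ} (h : i + 1 < m) : ConsAt m σ i ∨ InvAt m σ i := by
  rw [consat_iff, invat_iff]
  have hne : snat σ i ≠ snat σ (i+1) := fun hh => by
    have := snat_inj σ (Nat.lt_of_succ_lt h) h hh; omega
  omega

lemma not_cons_of_inv {i : ℕ} (h : InvAt m σ i) : ¬ ConsAt m σ i := by
  rw [consat_iff]; rw [invat_iff] at h; omega

def aF : ℕ → Fin n → ℂ
  | 0 => Bl hm v (m-1)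
  | (k+1) => if ConsAt m σ (m-1-(k+1)) then aF k else Bl hm v (m-1-(k+1))

def aa (i : ℕ) : Fin n → ℂ := aF hm σ v (m-1-i)

lemma aa_top : aa hm σ v (m-1) = Bl hm v (m-1) := by
  unfold aa
  rw [show m-1-(m-1) = 0 from by omega]
  rfl

lemma aa_eq {i : ℕ} (h : i + 1 ≤ m - 1) :
    aa hm σ v i = if ConsAt m σ i then aa hm σ v (i+1) else Bl hm v i := by
  unfold aa
  rw [show m-1-i = (m-1-(i+1))+1 from by omega]
  show aF hm σ v _ = _
  rw [aF]
  rw [show m-1-((m-1-(i+1))+1) = i from by omega]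

def bb : ℕ → Fin n → ℂ
  | 0 => 0
  | (i+1) => if InvAt m σ i then (-A (i : Fin (m+1))) *ᵥ (aa hm σ v i) + bb i else Bl hm v i

def nu (i : ℕ) : ℕ := ∑ d ∈ Finset.range i, if InvAt m σ d then 1 else 0

lemma nu_succ (i : ℕ) : nu σ (i+1) = nu σ i + if InvAt m σ i then 1 else 0 :=
  Finset.sum_range_succ _ i

lemma nu_zero : nu σ 0 = 0 := rfl

def Km (i : ℕ) : Matrix (Fin n) (Fin n) ℂ :=
  ∑ k ∈ Finset.range (m+1-i), lam ^ k • A ((k + i : ℕ) : Fin (m+1))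

lemma Km_last : Km A lam m = A (m : Fin (m+1)) := by
  unfold Km
  rw [show m+1-m = 1 from by omega]
  simp

lemma Km_step {i : ℕ} (h : i < m) :
    Km A lam i = A (i : Fin (m+1)) + lam • Km A lam (i+1) := by
  unfold Km
  rw [show m+1-i = (m+1-(i+1))+1 from by omega, Finset.sum_range_succ']
  simp only [pow_zero, one_smul, Nat.zero_add]
  rw [add_comm]
  congr 1
  rw [Finset.smul_sum]
  apply Finset.sum_congr rfl
  intro k _
  rw [smul_smul, ← pow_succ']
  have hx : k + 1 + i = k + (i + 1) := by omega
  rw [hx]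

lemma Km_zero : Km A lam 0 = PEval m n A lam := by
  unfold Km PEval
  simp only [Nat.sub_zero, Nat.add_zero]
  rw [← Fin.sum_univ_eq_sum_range (fun k => lam ^ k • A ((k : ℕ) : Fin (m+1))) (m+1)]
  apply Finset.sum_congr rfl
  intro j _
  simp

def G (i : ℕ) : Matrix (Fin n) (Fin n) ℂ :=
  if ConsAt m σ i then lam ^ (nu σ i) • Km A lam (i+1) else lam ^ (nu σ i) • 1

end Seqs
end S4

namespace S4
section Chain
variable {m n : ℕ} (hm : 0 < m) (σ : Equiv.Perm (Fin m))
  (A : Fin (m+1) → Matrix (Fin n) (Fin n) ℂ) (v : Fin m × Fin n → ℂ)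

def Fs : List (Matrix (Fin m × Fin n) (Fin m × Fin n) ℂ) :=
  List.ofFn fun j : Fin m => FM m n A ((σ.symm j : Fin m) : ℕ)

def Y (t : ℕ) : Fin m × Fin n → ℂ :=
  (List.drop t (Fs σ A)).foldr (fun M w => M *ᵥ w) v

lemma Fs_length : (Fs σ A).length = m := by simp [Fs]

lemma Y_base : Y σ A v m = v := by
  unfold Y
  rw [List.drop_of_length_le (by rw [Fs_length])]
  rfl

lemma prod_mulVec (l : List (Matrix (Fin m × Fin n) (Fin m × Fin n) ℂ)) :
    l.prod *ᵥ v = l.foldr (fun M w => M *ᵥ w) v := by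
  induction l with
  | nil => simp [Matrix.one_mulVec]
  | cons M l ih => rw [List.prod_cons, List.foldr_cons, ← ih, Matrix.mulVec_mulVec]

lemma Y_zero : Mperm m n A σ *ᵥ v = Y σ A v 0 := by
  unfold Y Mperm
  rw [List.drop_zero]
  exact prod_mulVec v _

lemma Y_succ {t : ℕ} (ht : t < m) :
    Y σ A v t = FM m n A ((σ.symm ⟨t, ht⟩ : Fin m) : ℕ) *ᵥ Y σ A v (t+1) := by
  unfold Y
  rw [List.drop_eq_getElem_cons (by rw [Fs_length]; exact ht), List.foldr_cons]
  congr 1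
  unfold Fs
  rw [List.getElem_ofFn]

def val (t i : ℕ) : Fin n → ℂ :=
  if i+1 < m ∧ t ≤ snat σ (i+1) ∧ (snat σ i < t ∨ snat σ (i+1) < snat σ i) then
    aa hm σ v (i+1)
  else if t ≤ snat σ i then (-A (i : Fin (m+1))) *ᵥ aa hm σ v i + bb hm σ A v i
  else Bl hm v i

lemma val_before_top {t i0 : ℕ} (hi0 : i0 < m) (hs : snat σ i0 = t) :
    val hm σ A v (t+1) i0 = aa hm σ v i0 := by
  unfold val
  by_cases hc : ConsAt m σ i0
  · obtain ⟨h1, h2⟩ := (consat_iff σ i0).mp hc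
    rw [if_pos ⟨h1, by omega, by omega⟩]
    conv_rhs => rw [aa_eq hm σ v (i := i0) (by omega), if_pos hc]
  · rw [if_neg, if_neg (by omega)]
    · by_cases he : i0 = m - 1
      · subst he; exact (aa_top hm σ v).symm
      · rw [aa_eq hm σ v (i := i0) (by omega), if_neg hc]
    · rintro ⟨h1, h2, h3⟩
      exact hc ((consat_iff σ i0).mpr ⟨h1, by omega⟩)

lemma val_before_bot {t i0 : ℕ} (h1 : 0 < i0) (hi0 : i0 < m) (hs : snat σ i0 = t) :
    val hm σ A v (t+1) (i0-1) = bb hm σ A v i0 := by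
  have hio : i0 - 1 + 1 = i0 := by omega
  unfold val
  rw [if_neg (by rw [hio]; omega)]
  by_cases hinv : InvAt m σ (i0-1)
  · obtain ⟨g1, g2⟩ := (invat_iff σ (i0-1)).mp hinv
    rw [hio] at g2
    rw [if_pos (by omega)]
    conv_rhs => rw [← hio]
    rw [show bb hm σ A v ((i0-1)+1)
        = if InvAt m σ (i0-1) then
            (-A ((i0-1 : ℕ) : Fin (m+1))) *ᵥ (aa hm σ v (i0-1)) + bb hm σ A v (i0-1)
          else Bl hm v (i0-1) from rfl]
    rw [if_pos hinv]
  · have hc : ConsAt m σ (i0-1) := by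
      rcases cons_or_inv σ (i := i0-1) (by omega) with h | h
      · exact h
      · exact absurd h hinv
    obtain ⟨g1, g2⟩ := (consat_iff σ (i0-1)).mp hc
    rw [hio] at g2
    rw [if_neg (by omega)]
    conv_rhs => rw [← hio]
    rw [show bb hm σ A v ((i0-1)+1)
        = if InvAt m σ (i0-1) then
            (-A ((i0-1 : ℕ) : Fin (m+1))) *ᵥ (aa hm σ v (i0-1)) + bb hm σ A v (i0-1)
          else Bl hm v (i0-1) from rfl]
    rw [if_neg hinv]

lemma val_after_top {t i0 : ℕ} (hi0 : i0 < m) (hs : snat σ i0 = t) :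
    val hm σ A v t i0 = (-A ((i0 : ℕ) : Fin (m+1))) *ᵥ aa hm σ v i0 + bb hm σ A v i0 := by
  unfold val
  rw [if_neg (by omega), if_pos (by omega)]

lemma val_after_bot {t i0 : ℕ} (h1 : 0 < i0) (hi0 : i0 < m) (hs : snat σ i0 = t)
    (hneq : snat σ (i0-1) ≠ t) :
    val hm σ A v t (i0-1) = aa hm σ v i0 := by
  have hio : i0 - 1 + 1 = i0 := by omega
  unfold val
  rw [if_pos (by rw [hio]; omega), hio]

lemma val_unchanged {t i : ℕ} (hi : i < m) (hne1 : snat σ i ≠ t)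
    (hne2 : i + 1 < m → snat σ (i+1) ≠ t) :
    val hm σ A v (t+1) i = val hm σ A v t i := by
  unfold val
  have h1 : (i+1 < m ∧ t+1 ≤ snat σ (i+1) ∧ (snat σ i < t+1 ∨ snat σ (i+1) < snat σ i))
      ↔ (i+1 < m ∧ t ≤ snat σ (i+1) ∧ (snat σ i < t ∨ snat σ (i+1) < snat σ i)) := by
    by_cases h : i + 1 < m
    · have := hne2 h
      constructor
      · rintro ⟨_, g2, g3⟩; exact ⟨h, by omega, by omega⟩
      · rintro ⟨_, g2, g3⟩; exact ⟨h, by omega, by omega⟩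
    · constructor
      · rintro ⟨g, _⟩; omega
      · rintro ⟨g, _⟩; omega
  have h2 : (t+1 ≤ snat σ i) ↔ (t ≤ snat σ i) := by omega
  rw [if_congr h1 rfl (if_congr h2 rfl rfl)]

set_option maxHeartbeats 2000000 in
lemma Y_inv : ∀ k, k ≤ m → ∀ i, i < m →
    (fun s => Y σ A v (m-k) (blk m hm i, s)) = val hm σ A v (m-k) i := by
  intro k
  induction k with
  | zero =>
    intro _ i hi
    funext s
    rw [Nat.sub_zero, Y_base]
    unfold val
    rw [if_neg, if_neg (by have := snat_lt σ hm i; omega)]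
    · rfl
    · rintro ⟨g1, g2, _⟩
      have := snat_lt σ hm (i+1); omega
  | succ k IH =>
    intro hk1 i hi
    have ht : m - (k+1) < m := by omega
    have ht1 : m - k = (m - (k+1)) + 1 := by omega
    set t := m - (k+1) with htdef
    have IH' : ∀ j, j < m →
        (fun s => Y σ A v (t+1) (blk m hm j, s)) = val hm σ A v (t+1) j := by
      intro j hj
      rw [← ht1]
      exact IH (by omega) j hj
    set i0 : ℕ := ((σ.symm ⟨t, ht⟩ : Fin m) : ℕ) with hi0def
    have hi0m : i0 < m := (σ.symm ⟨t, ht⟩).isLt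
    have hsi0 : snat σ i0 = t := by
      unfold snat
      rw [dif_pos hi0m]
      have : (⟨i0, hi0m⟩ : Fin m) = σ.symm ⟨t, ht⟩ := Fin.ext rfl
      rw [this, Equiv.apply_symm_apply]
    have hinj : ∀ j, j < m → snat σ j = t → j = i0 := by
      intro j hj hsj
      exact snat_inj σ hj hi0m (by rw [hsj, hsi0])
    have hYs : Y σ A v t = FM m n A i0 *ᵥ Y σ A v (t+1) := Y_succ σ A v ht
    have hBl : ∀ j, j < m → Bl hm (Y σ A v (t+1)) j = val hm σ A v (t+1) j := by
      intro j hj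
      exact IH' j hj
    funext s
    rw [hYs]
    by_cases hz : i0 = 0
    · -- factor M_0 : touches only block row m-1 (i.e. index 0)
      rw [hz] at hsi0 ⊢
      rw [FM0_mulVec A hm]
      by_cases hie : i = 0
      · subst hie
        rw [if_pos (by rw [blk_val]; omega)]
        rw [val_after_top hm σ A v (by omega) hsi0]
        have : Bl hm (Y σ A v (t+1)) 0 = aa hm σ v 0 := by
          rw [hBl 0 (by omega)]
          exact val_before_top hm σ A v (by omega) hsi0
        rw [this]
        show _ = ((-A ((0:ℕ) : Fin (m+1))) *ᵥ aa hm σ v 0) s + bb hm σ A v 0 s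
        rw [show bb hm σ A v 0 = 0 from rfl]
        simp
      · rw [if_neg (by rw [blk_val]; omega)]
        have hni : snat σ i ≠ t := fun hh => by
          have := hinj i hi hh; omega
        have hni2 : i + 1 < m → snat σ (i+1) ≠ t := by
          intro h hh
          have := hinj (i+1) h hh
          omega
        rw [show Y σ A v (t+1) (blk m hm i, s) = Bl hm (Y σ A v (t+1)) i s from rfl,
          hBl i hi, val_unchanged hm σ A v hi hni hni2]
    · -- factor M_{i0}, 1 ≤ i0 ≤ m-1
      have hz' : 0 < i0 := by omega
      rw [FMmid_mulVec A hm hz' hi0m]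
      by_cases hie : i = i0
      · subst hie
        rw [if_pos (by rw [blk_val]; omega)]
        rw [val_after_top hm σ A v hi0m hsi0]
        rw [hBl i0 hi0m, hBl (i0-1) (by omega),
          val_before_top hm σ A v hi0m hsi0,
          val_before_bot hm σ A v hz' hi0m hsi0]
        rfl
      · rw [if_neg (by rw [blk_val]; omega)]
        by_cases hie2 : i = i0 - 1
        · subst hie2
          rw [if_pos (by rw [blk_val]; omega)]
          rw [hBl i0 hi0m, val_before_top hm σ A v hi0m hsi0]
          have hneq : snat σ (i0-1) ≠ t := by
            intro hh
            have := hinj (i0-1) (by omega) hh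
            omega
          rw [val_after_bot hm σ A v hz' hi0m hsi0 hneq]
        · rw [if_neg (by rw [blk_val]; omega)]
          have hni : snat σ i ≠ t := fun hh => hie (hinj i hi hh)
          have hni2 : i + 1 < m → snat σ (i+1) ≠ t := by
            intro h hh
            have := hinj (i+1) h hh
            omega
          rw [show Y σ A v (t+1) (blk m hm i, s) = Bl hm (Y σ A v (t+1)) i s from rfl,
            hBl i hi, val_unchanged hm σ A v hi hni hni2]

def val0 (i : ℕ) : Fin n → ℂ :=
  if InvAt m σ i then aa hm σ v (i+1)
  else (-A ((i : ℕ) : Fin (m+1))) *ᵥ aa hm σ v i + bb hm σ A v i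

lemma Mperm_mulVec_blocks (i : ℕ) (hi : i < m) :
    (fun s => (Mperm m n A σ *ᵥ v) (blk m hm i, s)) = val0 hm σ A v i := by
  rw [Y_zero σ A v]
  have h0 : (0:ℕ) = m - m := by omega
  rw [show Y σ A v 0 = Y σ A v (m - m) from by rw [← h0]]
  rw [Y_inv hm σ A v m (le_refl m) i hi]
  unfold val val0
  have hs0 : 0 ≤ snat σ i := Nat.zero_le _
  rw [← h0]
  by_cases hinv : InvAt m σ i
  · obtain ⟨g1, g2⟩ := (invat_iff σ i).mp hinv
    rw [if_pos ⟨g1, by omega, by omega⟩, if_pos hinv]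
  · rw [if_neg, if_neg hinv, if_pos (by omega)]
    rintro ⟨g1, g2, g3⟩
    rcases g3 with g3 | g3
    · omega
    · exact hinv ((invat_iff σ i).mpr ⟨g1, g3⟩)

end Chain
end S4

namespace S4
section Eqs
variable {m n : ℕ} (hm : 0 < m) (σ : Equiv.Perm (Fin m))
  (A : Fin (m+1) → Matrix (Fin n) (Fin n) ℂ) (lam : ℂ) (v : Fin m × Fin n → ℂ)

lemma not_inv_of_cons {i : ℕ} (h : ConsAt m σ i) : ¬ InvAt m σ i := by
  rw [invat_iff]; rw [consat_iff] at h; omega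

lemma blk_self (p : Fin m) : blk m hm (m - 1 - (p : ℕ)) = p := by
  apply Fin.ext
  rw [blk_val]
  have := p.isLt
  omega

lemma LP_apply (p : Fin m) (s : Fin n) :
    (LP m n A σ lam *ᵥ v) (p, s)
      = lam * (FM m n A m *ᵥ v) (p, s) - (Mperm m n A σ *ᵥ v) (p, s) := by
  unfold LP
  rw [Matrix.sub_mulVec, Matrix.smul_mulVec]
  simp

lemma bb_succ (i : ℕ) : bb hm σ A v (i+1)
    = if InvAt m σ i then
        (-A ((i : ℕ) : Fin (m+1))) *ᵥ (aa hm σ v i) + bb hm σ A v i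
      else Bl hm v i := rfl

lemma bb_zero : bb hm σ A v 0 = 0 := rfl

lemma LPeq : LP m n A σ lam *ᵥ v = 0 ↔ ∀ i, i < m →
    lam • (if i = m - 1 then A ((m : ℕ) : Fin (m+1)) *ᵥ Bl hm v (m-1) else Bl hm v i)
      = val0 hm σ A v i := by
  have key : ∀ i, i < m → ∀ s : Fin n,
      (LP m n A σ lam *ᵥ v) (blk m hm i, s)
        = (lam • (if i = m - 1 then A ((m : ℕ) : Fin (m+1)) *ᵥ Bl hm v (m-1)
            else Bl hm v i)) s - val0 hm σ A v i s := by
    intro i hi s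
    rw [LP_apply, FMm_mulVec A hm]
    have h2 : (Mperm m n A σ *ᵥ v) (blk m hm i, s) = val0 hm σ A v i s :=
      congrFun (Mperm_mulVec_blocks hm σ A v i hi) s
    rw [h2]
    have h3 : (((blk m hm i : Fin m) : ℕ) = 0) ↔ i = m - 1 := by rw [blk_val]; omega
    rw [if_congr h3 rfl rfl]
    congr 1
    rw [Pi.smul_apply, smul_eq_mul, apply_ite (fun f : Fin n → ℂ => f s)]
    rfl
  constructor
  · intro h i hi
    funext s
    have h1 := congrFun h (blk m hm i, s)
    rw [key i hi s] at h1
    simp only [Pi.zero_apply] at h1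
    have := sub_eq_zero.mp h1
    exact this
  · intro h
    funext p
    obtain ⟨p1, s⟩ := p
    have hi : m - 1 - (p1 : ℕ) < m := by omega
    have hp : blk m hm (m - 1 - (p1 : ℕ)) = p1 := blk_self hm p1
    rw [Pi.zero_apply, ← hp, key _ hi s, sub_eq_zero, h _ hi]

end Eqs
end S4

namespace S4
section Rec
variable {m n : ℕ} (hm : 0 < m) (σ : Equiv.Perm (Fin m))
  (A : Fin (m+1) → Matrix (Fin n) (Fin n) ℂ) (lam : ℂ) (v : Fin m × Fin n → ℂ)
  {c1 : ℕ}

lemma IsC1_le (hc1 : IsC1 m σ c1) : c1 ≤ m - 1 := by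
  by_contra h
  obtain ⟨hlt, _⟩ := hc1.1 (m-1) (by omega)
  omega

lemma nu_c1 (hc1 : IsC1 m σ c1) : nu σ c1 = 0 := by
  apply Finset.sum_eq_zero
  intro d hd
  rw [if_neg (not_inv_of_cons σ (hc1.1 d (Finset.mem_range.mp hd)))]

lemma aa_zero_eq (hc1 : IsC1 m σ c1) : aa hm σ v 0 = Bl hm v c1 := by
  have hc1m : c1 ≤ m - 1 := IsC1_le σ hc1
  have base : aa hm σ v c1 = Bl hm v c1 := by
    by_cases hce : c1 = m - 1
    · rw [hce]; exact aa_top hm σ v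
    · rw [aa_eq hm σ v (i := c1) (by omega), if_neg hc1.2]
  have claim : ∀ j, j ≤ c1 → aa hm σ v (c1 - j) = Bl hm v c1 := by
    intro j
    induction j with
    | zero => intro _; simpa using base
    | succ j ih =>
      intro hj
      have hcons : ConsAt m σ (c1 - (j+1)) := hc1.1 _ (by omega)
      rw [aa_eq hm σ v (i := c1 - (j+1)) (by omega), if_pos hcons,
        show c1 - (j+1) + 1 = c1 - j from by omega]
      exact ih (by omega)
  have := claim c1 le_rfl
  rwa [Nat.sub_self] at this

lemma G_c1_mulVec (hc1 : IsC1 m σ c1) (x : Fin n → ℂ) : G σ A lam c1 *ᵥ x = x := by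
  unfold G
  rw [if_neg hc1.2, nu_c1 σ hc1, pow_zero, one_smul, Matrix.one_mulVec]

lemma smul_combine' (c d : ℂ) (M N : Matrix (Fin n) (Fin n) ℂ) (x : Fin n → ℂ) :
    c • (d • (N *ᵥ x)) + d • (M *ᵥ x) = d • ((M + c • N) *ᵥ x) := by
  rw [Matrix.add_mulVec, Matrix.smul_mulVec, smul_add, smul_smul, smul_smul,
    mul_comm c d]
  abel

lemma REC (hc1 : IsC1 m σ c1) (hLv : LP m n A σ lam *ᵥ v = 0) :
    PEval m n A lam *ᵥ Bl hm v c1 = 0 ∧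
    ∀ i, i < m → Bl hm v i = G σ A lam i *ᵥ Bl hm v c1 := by
  have hc1m : c1 ≤ m - 1 := IsC1_le σ hc1
  set x := Bl hm v c1 with hxdef
  have heq := (LPeq hm σ A lam v).mp hLv
  -- Step 1 : the `a` chain
  have S1 : ∀ i, i < m → aa hm σ v i = lam ^ (nu σ i) • x := by
    intro i
    induction i with
    | zero =>
      intro _
      rw [aa_zero_eq hm σ v hc1, show nu σ 0 = 0 from rfl, pow_zero, one_smul]
    | succ i ih =>
      intro h
      have hii := ih (by omega)
      rcases cons_or_inv σ (i := i) h with hc | hv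
      · have h1 : aa hm σ v (i+1) = aa hm σ v i := by
          conv_rhs => rw [aa_eq hm σ v (i := i) (by omega), if_pos hc]
        rw [h1, hii, nu_succ, if_neg (not_inv_of_cons σ hc), Nat.add_zero]
      · have h1 : aa hm σ v i = Bl hm v i := by
          rw [aa_eq hm σ v (i := i) (by omega), if_neg (not_cons_of_inv σ hv)]
        have h2 := heq i (by omega)
        rw [if_neg (by omega)] at h2
        rw [show val0 hm σ A v i = aa hm σ v (i+1) from by
          unfold val0; rw [if_pos hv]] at h2
        rw [← h2, ← h1, hii, nu_succ, if_pos hv, smul_smul, pow_succ, mul_comm]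
  -- Step 2 : the `b` chain, downward
  have S2 : ∀ k, k ≤ m - 1 →
      bb hm σ A v (m-1-k) = lam ^ (nu σ (m-1-k)) • (Km A lam (m-1-k) *ᵥ x) := by
    intro k
    induction k with
    | zero =>
      intro _
      simp only [Nat.sub_zero]
      have h2 := heq (m-1) (by omega)
      rw [if_pos rfl] at h2
      rw [show val0 hm σ A v (m-1)
          = (-A (((m-1 : ℕ)) : Fin (m+1))) *ᵥ aa hm σ v (m-1) + bb hm σ A v (m-1) from by
        unfold val0; rw [if_neg (by rw [invat_iff]; omega)]] at h2
      have hbb : bb hm σ A v (m-1)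
          = lam • (A ((m : ℕ) : Fin (m+1)) *ᵥ Bl hm v (m-1))
            + A (((m-1 : ℕ)) : Fin (m+1)) *ᵥ aa hm σ v (m-1) := by
        rw [h2, Matrix.neg_mulVec]; abel
      have h3 : Bl hm v (m-1) = aa hm σ v (m-1) := (aa_top hm σ v).symm
      have h4 : aa hm σ v (m-1) = lam ^ (nu σ (m-1)) • x := S1 (m-1) (by omega)
      have hK : Km A lam (m-1)
          = A (((m-1 : ℕ)) : Fin (m+1)) + lam • A ((m : ℕ) : Fin (m+1)) := by
        rw [Km_step A lam (by omega : m - 1 < m), show m-1+1 = m from by omega, Km_last]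
      rw [hbb, h3, h4, hK]
      simp only [Matrix.mulVec_smul]
      exact smul_combine' lam _ _ _ x
    | succ k ihk =>
      intro hk1
      have hidx : m-1-(k+1)+1 = m-1-k := by omega
      set i := m-1-(k+1) with hidef
      have hi1m : i + 1 < m := by omega
      have hbk1 : bb hm σ A v (i+1) = lam ^ (nu σ (i+1)) • (Km A lam (i+1) *ᵥ x) := by
        rw [show i + 1 = m-1-k from by omega]
        exact ihk (by omega)
      have hKi : Km A lam i = A ((i : ℕ) : Fin (m+1)) + lam • Km A lam (i+1) :=
        Km_step A lam (by omega)
      have hai : aa hm σ v i = lam ^ (nu σ i) • x := S1 i (by omega)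
      rcases cons_or_inv σ (i := i) hi1m with hc | hv
      · have hbl : bb hm σ A v (i+1) = Bl hm v i := by
          rw [bb_succ, if_neg (not_inv_of_cons σ hc)]
        have h2 := heq i (by omega)
        rw [if_neg (by omega)] at h2
        rw [show val0 hm σ A v i
            = (-A ((i : ℕ) : Fin (m+1))) *ᵥ aa hm σ v i + bb hm σ A v i from by
          unfold val0; rw [if_neg (not_inv_of_cons σ hc)]] at h2
        have hbb : bb hm σ A v i
            = lam • Bl hm v i + A ((i : ℕ) : Fin (m+1)) *ᵥ aa hm σ v i := by
          rw [h2, Matrix.neg_mulVec]; abel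
        have hnu : nu σ (i+1) = nu σ i := by
          rw [nu_succ, if_neg (not_inv_of_cons σ hc), Nat.add_zero]
        rw [hbb, ← hbl, hbk1, hnu, hai, hKi]
        simp only [Matrix.mulVec_smul]
        exact smul_combine' lam _ _ _ x
      · have hbb : bb hm σ A v i
            = bb hm σ A v (i+1) + A ((i : ℕ) : Fin (m+1)) *ᵥ aa hm σ v i := by
          rw [bb_succ, if_pos hv, Matrix.neg_mulVec]; abel
        have hnu : nu σ (i+1) = nu σ i + 1 := by
          rw [nu_succ, if_pos hv]
        rw [hbb, hbk1, hnu, hai, hKi]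
        simp only [Matrix.mulVec_smul]
        rw [pow_succ, mul_comm, ← smul_smul]
        exact smul_combine' lam _ _ _ x
  -- Step 3 : the constraint
  have S3 : PEval m n A lam *ᵥ x = 0 := by
    have h0 := S2 (m-1) le_rfl
    rw [Nat.sub_self, show bb hm σ A v 0 = 0 from rfl,
      show nu σ 0 = 0 from rfl, pow_zero, one_smul, Km_zero] at h0
    exact h0.symm
  refine ⟨S3, ?_⟩
  -- Step 4 : the block formulas
  intro i hi
  by_cases hc : ConsAt m σ i
  · have hi1 : i + 1 < m := ((consat_iff σ i).mp hc).1
    have h1 : Bl hm v i = bb hm σ A v (i+1) := by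
      rw [bb_succ, if_neg (not_inv_of_cons σ hc)]
    have h2 : bb hm σ A v (i+1) = lam ^ (nu σ (i+1)) • (Km A lam (i+1) *ᵥ x) := by
      have := S2 (m-1-(i+1)) (by omega)
      rwa [show m-1-(m-1-(i+1)) = i+1 from by omega] at this
    have hnu : nu σ (i+1) = nu σ i := by
      rw [nu_succ, if_neg (not_inv_of_cons σ hc), Nat.add_zero]
    rw [h1, h2, hnu]
    unfold G
    rw [if_pos hc, Matrix.smul_mulVec]
  · have h1 : Bl hm v i = aa hm σ v i := by
      by_cases hce : i = m - 1
      · rw [hce]; exact (aa_top hm σ v).symm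
      · rw [aa_eq hm σ v (i := i) (by omega), if_neg hc]
    rw [h1, S1 i hi]
    unfold G
    rw [if_neg hc, Matrix.smul_mulVec, Matrix.one_mulVec]

end Rec
end S4

namespace S4
section Ext
variable {m n : ℕ} (hm : 0 < m) (σ : Equiv.Perm (Fin m))
  (A : Fin (m+1) → Matrix (Fin n) (Fin n) ℂ) (lam : ℂ)

def sol (x : Fin n → ℂ) : Fin m × Fin n → ℂ :=
  fun p => (G σ A lam (m - 1 - (p.1 : ℕ)) *ᵥ x) p.2

lemma Bl_sol (x : Fin n → ℂ) {e : ℕ} (he : e ≤ m - 1) :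
    Bl hm (sol σ A lam x) e = G σ A lam e *ᵥ x := by
  funext s
  show (G σ A lam (m - 1 - ((blk m hm e : Fin m) : ℕ)) *ᵥ x) s = _
  rw [blk_val, show m - 1 - (m - 1 - e) = e from by omega]

lemma G_noncons (x : Fin n → ℂ) {i : ℕ} (h : ¬ ConsAt m σ i) :
    G σ A lam i *ᵥ x = lam ^ (nu σ i) • x := by
  unfold G
  rw [if_neg h, Matrix.smul_mulVec, Matrix.one_mulVec]

lemma G_cons (x : Fin n → ℂ) {i : ℕ} (h : ConsAt m σ i) :
    G σ A lam i *ᵥ x = lam ^ (nu σ i) • (Km A lam (i+1) *ᵥ x) := by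
  unfold G
  rw [if_pos h, Matrix.smul_mulVec]

lemma not_cons_top : ¬ ConsAt m σ (m-1) := by
  rw [consat_iff]; omega

lemma not_inv_top : ¬ InvAt m σ (m-1) := by
  rw [invat_iff]; omega

lemma cancel_head (c d : ℂ) (M N : Matrix (Fin n) (Fin n) ℂ) (x : Fin n → ℂ) :
    (-M) *ᵥ (d • x) + d • ((M + c • N) *ᵥ x) = (d * c) • (N *ᵥ x) := by
  rw [Matrix.neg_mulVec, Matrix.mulVec_smul, Matrix.add_mulVec,
    Matrix.smul_mulVec, smul_add, smul_smul]
  abel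

include hm in
lemma EXT (x : Fin n → ℂ) (hx : PEval m n A lam *ᵥ x = 0) :
    LP m n A σ lam *ᵥ sol σ A lam x = 0 := by
  set v := sol σ A lam x with hvdef
  have hBl : ∀ e, e ≤ m - 1 → Bl hm v e = G σ A lam e *ᵥ x := fun e he =>
    Bl_sol hm σ A lam x he
  -- a-chain for the candidate solution
  have T1 : ∀ k, k ≤ m - 1 → aa hm σ v (m-1-k) = lam ^ (nu σ (m-1-k)) • x := by
    intro k
    induction k with
    | zero =>
      intro _
      simp only [Nat.sub_zero]
      rw [aa_top, hBl (m-1) le_rfl, G_noncons σ A lam x (not_cons_top σ)]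
    | succ k ih =>
      intro hk1
      have hidx : m-1-(k+1)+1 = m-1-k := by omega
      set i := m-1-(k+1) with hidef
      by_cases hc : ConsAt m σ i
      · rw [aa_eq hm σ v (i := i) (by omega), if_pos hc, hidx]
        have := ih (by omega)
        rw [this, show nu σ (m-1-k) = nu σ i from by
          rw [← hidx, nu_succ, if_neg (not_inv_of_cons σ hc), Nat.add_zero]]
      · rw [aa_eq hm σ v (i := i) (by omega), if_neg hc,
          hBl i (by omega), G_noncons σ A lam x hc]
  have aa_all : ∀ i, i < m → aa hm σ v i = lam ^ (nu σ i) • x := by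
    intro i hi
    have := T1 (m-1-i) (by omega)
    rwa [show m-1-(m-1-i) = i from by omega] at this
  -- b-chain for the candidate solution
  have T2 : ∀ i, i ≤ m - 1 → bb hm σ A v i = lam ^ (nu σ i) • (Km A lam i *ᵥ x) := by
    intro i
    induction i with
    | zero =>
      intro _
      rw [show bb hm σ A v 0 = 0 from rfl, show nu σ 0 = 0 from rfl, pow_zero,
        one_smul, Km_zero, hx]
    | succ i ih =>
      intro h
      have hi1m : i + 1 < m := by omega
      have hKi : Km A lam i = A ((i : ℕ) : Fin (m+1)) + lam • Km A lam (i+1) :=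
        Km_step A lam (by omega)
      rcases cons_or_inv σ (i := i) hi1m with hc | hv
      · rw [bb_succ, if_neg (not_inv_of_cons σ hc), hBl i (by omega),
          G_cons σ A lam x hc,
          show nu σ (i+1) = nu σ i from by
            rw [nu_succ, if_neg (not_inv_of_cons σ hc), Nat.add_zero]]
      · rw [bb_succ, if_pos hv, aa_all i (by omega), ih (by omega), hKi,
          nu_succ, if_pos hv, pow_succ]
        exact cancel_head lam _ _ _ x
  -- verify the pencil equations
  rw [(LPeq hm σ A lam v)]
  intro i hi
  by_cases hie : i = m - 1
  · subst hie
    rw [if_pos rfl]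
    rw [show val0 hm σ A v (m-1)
        = (-A (((m-1 : ℕ)) : Fin (m+1))) *ᵥ aa hm σ v (m-1) + bb hm σ A v (m-1) from by
      unfold val0; rw [if_neg (not_inv_top σ)]]
    have hK : Km A lam (m-1)
        = A (((m-1 : ℕ)) : Fin (m+1)) + lam • A ((m : ℕ) : Fin (m+1)) := by
      rw [Km_step A lam (by omega : m - 1 < m), show m-1+1 = m from by omega, Km_last]
    rw [aa_all (m-1) (by omega), T2 (m-1) le_rfl, hK,
      hBl (m-1) le_rfl, G_noncons σ A lam x (not_cons_top σ),
      Matrix.mulVec_smul, smul_smul, mul_comm lam (lam ^ nu σ (m-1))]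
    exact (cancel_head lam _ _ _ x).symm
  · rw [if_neg hie]
    have hi1m : i + 1 < m := by omega
    rcases cons_or_inv σ (i := i) hi1m with hc | hv
    · rw [show val0 hm σ A v i
          = (-A ((i : ℕ) : Fin (m+1))) *ᵥ aa hm σ v i + bb hm σ A v i from by
        unfold val0; rw [if_neg (not_inv_of_cons σ hc)]]
      have hKi : Km A lam i = A ((i : ℕ) : Fin (m+1)) + lam • Km A lam (i+1) :=
        Km_step A lam (by omega)
      rw [aa_all i (by omega), T2 i (by omega), hKi,
        hBl i (by omega), G_cons σ A lam x hc, smul_smul,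
        mul_comm lam (lam ^ nu σ i)]
      exact (cancel_head lam _ _ _ x).symm
    · rw [show val0 hm σ A v i = aa hm σ v (i+1) from by
        unfold val0; rw [if_pos hv]]
      rw [aa_all (i+1) (by omega), hBl i (by omega),
        G_noncons σ A lam x (not_cons_of_inv σ hv),
        nu_succ, if_pos hv, pow_succ, smul_smul, mul_comm lam (lam ^ nu σ i)]

lemma sol_Bl_c1 {c1 : ℕ} (hc1 : IsC1 m σ c1) (x : Fin n → ℂ) :
    Bl hm (sol σ A lam x) c1 = x := by
  rw [Bl_sol hm σ A lam x (IsC1_le σ hc1), G_c1_mulVec σ A lam hc1 x]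

end Ext
end S4

namespace S4

lemma rank_stack_iff {γ α β : Type*} [Fintype γ] [DecidableEq γ] [Fintype α] [Fintype β]
    (M : Matrix α γ ℂ) (N : Matrix β γ ℂ) :
    (Matrix.fromRows M N).rank = Fintype.card γ
      ↔ ∀ x : γ → ℂ, M *ᵥ x = 0 → N *ᵥ x = 0 → x = 0 := by
  have hrn := LinearMap.finrank_range_add_finrank_ker
    ((Matrix.fromRows M N).mulVecLin)
  rw [Module.finrank_pi ℂ] at hrn
  rw [Matrix.rank]
  constructor
  · intro h x hM hN
    have hker0 : Module.finrank ℂ (LinearMap.ker ((Matrix.fromRows M N).mulVecLin)) = 0 := by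
      omega
    have hker : LinearMap.ker ((Matrix.fromRows M N).mulVecLin) = ⊥ :=
      Submodule.finrank_eq_zero.mp hker0
    apply LinearMap.ker_eq_bot'.mp hker x
    rw [Matrix.mulVecLin_apply, Matrix.fromRows_mulVec, hM, hN]
    funext z
    cases z <;> rfl
  · intro h
    have hker : LinearMap.ker ((Matrix.fromRows M N).mulVecLin) = ⊥ := by
      rw [LinearMap.ker_eq_bot']
      intro x hx
      rw [Matrix.mulVecLin_apply, Matrix.fromRows_mulVec] at hx
      have hM : M *ᵥ x = 0 := by funext a; exact congrFun hx (Sum.inl a)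
      have hN : N *ᵥ x = 0 := by funext b; exact congrFun hx (Sum.inr b)
      exact h x hM hN
    rw [hker, finrank_bot] at hrn
    omega

section ECrow
variable {m n : ℕ} (hm : 0 < m)

lemma eC_mulVec {r c1 : ℕ} (hc1m : c1 ≤ m - 1) (C : Matrix (Fin r) (Fin n) ℂ)
    (v : Fin m × Fin n → ℂ) :
    eC m n r (m - c1) C *ᵥ v = C *ᵥ Bl hm v c1 := by
  funext q
  have key : ∀ p1 : Fin m, (((p1 : ℕ) + 1 = m - c1) ↔ p1 = blk m hm c1) := by
    intro p1; rw [Fin.ext_iff, blk_val]; omega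
  show ∑ p : Fin m × Fin n, eC m n r (m - c1) C q p * v p = _
  rw [Fintype.sum_prod_type]
  have step : ∀ p1 : Fin m,
      (∑ p2 : Fin n, eC m n r (m - c1) C q (p1, p2) * v (p1, p2))
        = if p1 = blk m hm c1 then ∑ p2 : Fin n, C q p2 * v (p1, p2) else 0 := by
    intro p1
    by_cases h : p1 = blk m hm c1
    · rw [if_pos h]
      apply Finset.sum_congr rfl
      intro p2 _
      show (if ((p1 : ℕ) + 1 = m - c1) then C q p2 else 0) * v (p1, p2) = _
      rw [if_pos ((key p1).mpr h)]
    · rw [if_neg h]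
      apply Finset.sum_eq_zero
      intro p2 _
      show (if ((p1 : ℕ) + 1 = m - c1) then C q p2 else 0) * v (p1, p2) = 0
      rw [if_neg fun hc => h ((key p1).mp hc), zero_mul]
  rw [Finset.sum_congr rfl fun p1 _ => step p1, Finset.sum_ite_eq' Finset.univ]
  simp only [Finset.mem_univ, if_true]
  rfl

end ECrow
end S4


/-- the higher order system is observable iff the linearized system is
observable: `rank [P(λ); C] = n` for all `λ` iff `rank [L_σ(λ); c] = nm` for all `λ`. -/
theorem stmt4 (m n r : ℕ) (hm : 2 ≤ m) (hn : 1 ≤ n) (hr : 1 ≤ r)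
    (A : Fin (m + 1) → Matrix (Fin n) (Fin n) ℂ) (hreg : Regular m n A)
    (C : Matrix (Fin r) (Fin n) ℂ)
    (σ : Equiv.Perm (Fin m)) (c1 i1 : ℕ) (hc1 : IsC1 m σ c1) (hi1 : IsI1 m σ c1 i1) :
    (∀ lam : ℂ, (Matrix.fromRows (PEval m n A lam) C).rank = n) ↔
      (∀ lam : ℂ,
        (Matrix.fromRows (LP m n A σ lam)
            (if 0 < c1 then eC m n r (m - c1) C else eC m n r m C)).rank = n * m) := by
  have hm0 : 0 < m := by omega
  have hc1m : c1 ≤ m - 1 := S4.IsC1_le σ hc1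
  have heCif : (if 0 < c1 then eC m n r (m - c1) C else eC m n r m C)
      = eC m n r (m - c1) C := by
    by_cases h : 0 < c1
    · rw [if_pos h]
    · rw [if_neg h, show m - c1 = m from by omega]
  rw [heCif]
  apply forall_congr'
  intro lam
  have h1 : (Matrix.fromRows (PEval m n A lam) C).rank = n
      ↔ ∀ x : Fin n → ℂ, PEval m n A lam *ᵥ x = 0 → C *ᵥ x = 0 → x = 0 := by
    have := S4.rank_stack_iff (PEval m n A lam) C
    rwa [Fintype.card_fin] at this
  have h2 : (Matrix.fromRows (LP m n A σ lam) (eC m n r (m - c1) C)).rank = n * m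
      ↔ ∀ v : Fin m × Fin n → ℂ,
          LP m n A σ lam *ᵥ v = 0 → eC m n r (m - c1) C *ᵥ v = 0 → v = 0 := by
    have := S4.rank_stack_iff (LP m n A σ lam) (eC m n r (m - c1) C)
    rwa [show Fintype.card (Fin m × Fin n) = n * m from by
      rw [Fintype.card_prod, Fintype.card_fin, Fintype.card_fin, Nat.mul_comm]] at this
  rw [h1, h2]
  constructor
  · intro h v hLv hCv
    obtain ⟨hP, hblocks⟩ := S4.REC hm0 σ A lam v hc1 hLv
    rw [S4.eC_mulVec hm0 hc1m C v] at hCv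
    have hx0 : S4.Bl hm0 v c1 = 0 := h _ hP hCv
    funext p
    obtain ⟨p1, s⟩ := p
    have hb := congrFun (hblocks (m - 1 - (p1 : ℕ)) (by omega)) s
    have hv : S4.Bl hm0 v (m - 1 - (p1 : ℕ)) s = v (p1, s) := by
      show v (S4.blk m hm0 (m - 1 - (p1 : ℕ)), s) = v (p1, s)
      rw [S4.blk_self hm0 p1]
    rw [hv] at hb
    rw [Pi.zero_apply, hb, hx0, Matrix.mulVec_zero]
    rfl
  · intro h x hP hCx
    have hLv := S4.EXT hm0 σ A lam x hP
    have hCv : eC m n r (m - c1) C *ᵥ S4.sol σ A lam x = 0 := by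
      rw [S4.eC_mulVec hm0 hc1m, S4.sol_Bl_c1 hm0 σ A lam hc1 x, hCx]
    have hv0 := h _ hLv hCv
    rw [← S4.sol_Bl_c1 hm0 σ A lam hc1 x, hv0]
    funext s
    rfl


end
end
end

section
/- Let w = (w_0, w_1) be a proper permutation of {0,1,…,m} with CIP(w_0) = (c_0, i_0). Then the PGF pencil of G associated with w has the block form 𝕂_w(λ) = [[K_w(λ), e_{m−i_0} ⊗ B],[e_{m−c_0}^T ⊗ C, D]], where K_w(λ) is the PGF pencil of P associated with w. -/
open Matrix
open Fin.NatCast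

noncomputable section

/-! ### Auxiliary machinery for STATEMENT 6 -/

section Stmt6Aux

variable {m n r : ℕ} {A : Fin (m + 1) → Matrix (Fin n) (Fin n) ℂ}
  {B : Matrix (Fin n) (Fin r) ℂ} {C : Matrix (Fin r) (Fin n) ℂ}
  {D : Matrix (Fin r) (Fin r) ℂ}

/-! #### List lemmas -/

lemma aux_indexOf_inj : ∀ {l : List ℕ} {x y : ℕ}, x ∈ l → y ∈ l →
    l.idxOf x = l.idxOf y → x = y := by
  intro l
  induction l with
  | nil => intro x y hx _ _; simp at hx
  | cons a l ih =>
    intro x y hx hy h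
    by_cases hxa : x = a <;> by_cases hya : y = a
    · rw [hxa, hya]
    · rw [List.idxOf_cons_eq _ hxa.symm, List.idxOf_cons_ne _ (fun h' => hya h'.symm)] at h
      exact absurd h (by omega)
    · rw [List.idxOf_cons_eq _ hya.symm, List.idxOf_cons_ne _ (fun h' => hxa h'.symm)] at h
      exact absurd h (by omega)
    · rw [List.idxOf_cons_ne _ (fun h' => hxa h'.symm),
        List.idxOf_cons_ne _ (fun h' => hya h'.symm)] at h
      exact ih ((List.mem_cons.mp hx).resolve_left hxa)
        ((List.mem_cons.mp hy).resolve_left hya) (by omega)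

lemma aux_mem_take_indexOf {x : ℕ} : ∀ {l : List ℕ} {k : ℕ}, x ∈ l.take k →
    l.idxOf x < k := by
  intro l
  induction l with
  | nil => intro k h; simp at h
  | cons a l ih =>
    intro k h
    cases k with
    | zero => simp at h
    | succ k =>
      rw [List.take_succ_cons] at h
      by_cases hxa : x = a
      · rw [hxa, List.idxOf_cons_self]; omega
      · have hx : x ∈ l.take k := (List.mem_cons.mp h).resolve_left hxa
        have := ih hx
        rw [List.idxOf_cons_ne _ (fun h' => hxa h'.symm)]
        omega

lemma aux_mem_drop_ge {x : ℕ} {l : List ℕ} {k : ℕ} (hnd : l.Nodup) (h : x ∈ l.drop k) :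
    k ≤ l.idxOf x := by
  by_contra hlt
  push_neg at hlt
  have hxl : x ∈ l := List.drop_subset _ _ h
  have hidx : l.idxOf x < l.length := List.idxOf_lt_length_iff.mpr hxl
  have hmemtake : x ∈ l.take k := by
    have h1 : l.idxOf x < (l.take k).length := by
      rw [List.length_take]; omega
    have h2 : (l.take k)[l.idxOf x]'h1 = x := by
      rw [List.getElem_take]; exact List.getElem_idxOf hidx
    rw [← h2]; exact List.getElem_mem h1
  have hnd2 : (l.take k ++ l.drop k).Nodup := by
    rw [List.take_append_drop]; exact hnd
  exact (List.nodup_append'.mp hnd2).2.2 hmemtake h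

/-! #### Block description of the Fiedler matrices -/

/-- The `(a, b)` block of the Fiedler matrix `M_i`. -/
def FMblk (m n : ℕ) (A : Fin (m + 1) → Matrix (Fin n) (Fin n) ℂ) (i : ℕ) (a b : Fin m) :
    Matrix (Fin n) (Fin n) ℂ :=
  if i = 0 then
    if a = b then
      (if (a : ℕ) = m - 1 then -A 0 else (1 : Matrix (Fin n) (Fin n) ℂ)) else 0
  else if i = m then
    if a = b then (if (a : ℕ) = 0 then A (m : Fin (m + 1)) else 1) else 0
  else
    if (a : ℕ) = m - i - 1 ∧ (b : ℕ) = m - i - 1 then -A (i : Fin (m + 1))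
    else if (a : ℕ) = m - i - 1 ∧ (b : ℕ) = m - i then 1
    else if (a : ℕ) = m - i ∧ (b : ℕ) = m - i - 1 then 1
    else if (a : ℕ) = m - i ∧ (b : ℕ) = m - i then 0
    else if a = b then 1 else 0

lemma FM_eq (i : ℕ) : FM m n A i = Matrix.of fun p q => FMblk m n A i p.1 q.1 p.2 q.2 := rfl

lemma FM_mul_eB (i j : ℕ) (hj : 1 ≤ j) (hjm : j ≤ m) :
    FM m n A i * eB m n r j B =
      Matrix.of fun p q => (FMblk m n A i p.1 ⟨j - 1, by omega⟩ * B) p.2 q := by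
  ext p q
  have key : ∀ b : Fin m, (∑ k : Fin n, FM m n A i p (b, k) * eB m n r j B (b, k) q)
      = if b = (⟨j - 1, by omega⟩ : Fin m) then (FMblk m n A i p.1 b * B) p.2 q else 0 := by
    intro b
    by_cases hb : b = (⟨j - 1, by omega⟩ : Fin m)
    · rw [if_pos hb, Matrix.mul_apply]
      refine Finset.sum_congr rfl fun k _ => ?_
      simp only [FM_eq, eB, Matrix.of_apply]
      rw [if_pos (by rw [hb]; simp only [Fin.val_mk]; omega)]
    · rw [if_neg hb]
      refine Finset.sum_eq_zero fun k _ => ?_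
      simp only [eB, Matrix.of_apply]
      rw [if_neg (fun hc => hb (Fin.ext (by simp only [Fin.val_mk]; omega))), mul_zero]
  rw [Matrix.mul_apply, Fintype.sum_prod_type]
  simp_rw [key]
  rw [Finset.sum_ite_eq' Finset.univ, if_pos (Finset.mem_univ _)]
  rfl

lemma eC_mul_FM (i j : ℕ) (hj : 1 ≤ j) (hjm : j ≤ m) :
    eC m n r j C * FM m n A i =
      Matrix.of fun c p => (C * FMblk m n A i ⟨j - 1, by omega⟩ p.1) c p.2 := by
  ext c p
  have key : ∀ b : Fin m, (∑ k : Fin n, eC m n r j C c (b, k) * FM m n A i (b, k) p)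
      = if b = (⟨j - 1, by omega⟩ : Fin m) then (C * FMblk m n A i b p.1) c p.2 else 0 := by
    intro b
    by_cases hb : b = (⟨j - 1, by omega⟩ : Fin m)
    · rw [if_pos hb, Matrix.mul_apply]
      refine Finset.sum_congr rfl fun k _ => ?_
      simp only [FM_eq, eC, Matrix.of_apply]
      rw [if_pos (by rw [hb]; simp only [Fin.val_mk]; omega)]
    · rw [if_neg hb]
      refine Finset.sum_eq_zero fun k _ => ?_
      simp only [eC, Matrix.of_apply]
      rw [if_neg (fun hc => hb (Fin.ext (by simp only [Fin.val_mk]; omega))), zero_mul]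
  rw [Matrix.mul_apply, Fintype.sum_prod_type]
  simp_rw [key]
  rw [Finset.sum_ite_eq' Finset.univ, if_pos (Finset.mem_univ _)]
  rfl

/-! #### Single-step lemmas -/

lemma stepFixB (hm : 2 ≤ m) (i t : ℕ) (h1 : 1 ≤ i) (h2 : i ≤ m - 1) (ht : t ≤ m - 1)
    (hit : i ≠ t) (hit1 : i ≠ t + 1) :
    FM m n A i * eB m n r (m - t) B = eB m n r (m - t) B := by
  rw [FM_mul_eB (A := A) (B := B) i (m - t) (by omega) (by omega)]
  ext p q
  have hp := p.1.isLt
  rw [Matrix.of_apply]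
  have hb : FMblk m n A i p.1 ⟨m - t - 1, by omega⟩
      = if (p.1 : ℕ) = m - t - 1 then (1 : Matrix (Fin n) (Fin n) ℂ) else 0 := by
    unfold FMblk
    rw [if_neg (by omega : ¬ i = 0), if_neg (by omega : ¬ i = m)]
    simp only [Fin.ext_iff, Fin.val_mk]
    split_ifs <;> first | rfl | omega
  rw [hb, apply_ite (fun M : Matrix (Fin n) (Fin n) ℂ => (M * B) p.2 q),
    Matrix.one_mul, Matrix.zero_mul]
  show _ = eB m n r (m - t) B p q
  simp only [eB, Matrix.of_apply]
  by_cases hc : (p.1 : ℕ) = m - t - 1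
  · rw [if_pos hc, if_pos (by omega : (p.1 : ℕ) + 1 = m - t)]
  · rw [if_neg hc, if_neg (by omega : ¬((p.1 : ℕ) + 1 = m - t)), Matrix.zero_apply]

lemma stepMoveB (hm : 2 ≤ m) (t : ℕ) (ht : t + 1 ≤ m - 1) :
    FM m n A (t + 1) * eB m n r (m - t) B = eB m n r (m - t - 1) B := by
  rw [FM_mul_eB (A := A) (B := B) (t + 1) (m - t) (by omega) (by omega)]
  ext p q
  have hp := p.1.isLt
  rw [Matrix.of_apply]
  have hb : FMblk m n A (t + 1) p.1 ⟨m - t - 1, by omega⟩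
      = if (p.1 : ℕ) = m - t - 2 then (1 : Matrix (Fin n) (Fin n) ℂ) else 0 := by
    unfold FMblk
    rw [if_neg (by omega : ¬ t + 1 = 0), if_neg (by omega : ¬ t + 1 = m)]
    simp only [Fin.ext_iff, Fin.val_mk]
    split_ifs <;> first | rfl | omega
  rw [hb, apply_ite (fun M : Matrix (Fin n) (Fin n) ℂ => (M * B) p.2 q),
    Matrix.one_mul, Matrix.zero_mul]
  show _ = eB m n r (m - t - 1) B p q
  simp only [eB, Matrix.of_apply]
  by_cases hc : (p.1 : ℕ) = m - t - 2
  · rw [if_pos hc, if_pos (by omega : (p.1 : ℕ) + 1 = m - t - 1)]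
  · rw [if_neg hc, if_neg (by omega : ¬((p.1 : ℕ) + 1 = m - t - 1)), Matrix.zero_apply]

lemma stepFixC (hm : 2 ≤ m) (i t : ℕ) (h1 : 1 ≤ i) (h2 : i ≤ m - 1) (ht : t ≤ m - 1)
    (hit : i ≠ t) (hit1 : i ≠ t + 1) :
    eC m n r (m - t) C * FM m n A i = eC m n r (m - t) C := by
  rw [eC_mul_FM (A := A) (C := C) i (m - t) (by omega) (by omega)]
  ext c p
  have hp := p.1.isLt
  rw [Matrix.of_apply]
  have hb : FMblk m n A i ⟨m - t - 1, by omega⟩ p.1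
      = if (p.1 : ℕ) = m - t - 1 then (1 : Matrix (Fin n) (Fin n) ℂ) else 0 := by
    unfold FMblk
    rw [if_neg (by omega : ¬ i = 0), if_neg (by omega : ¬ i = m)]
    simp only [Fin.ext_iff, Fin.val_mk]
    split_ifs <;> first | rfl | omega
  rw [hb, apply_ite (fun M : Matrix (Fin n) (Fin n) ℂ => (C * M) c p.2),
    Matrix.mul_one, Matrix.mul_zero]
  show _ = eC m n r (m - t) C c p
  simp only [eC, Matrix.of_apply]
  by_cases hc : (p.1 : ℕ) = m - t - 1
  · rw [if_pos hc, if_pos (by omega : (p.1 : ℕ) + 1 = m - t)]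
  · rw [if_neg hc, if_neg (by omega : ¬((p.1 : ℕ) + 1 = m - t)), Matrix.zero_apply]

lemma stepMoveC (hm : 2 ≤ m) (t : ℕ) (ht : t + 1 ≤ m - 1) :
    eC m n r (m - t) C * FM m n A (t + 1) = eC m n r (m - t - 1) C := by
  rw [eC_mul_FM (A := A) (C := C) (t + 1) (m - t) (by omega) (by omega)]
  ext c p
  have hp := p.1.isLt
  rw [Matrix.of_apply]
  have hb : FMblk m n A (t + 1) ⟨m - t - 1, by omega⟩ p.1
      = if (p.1 : ℕ) = m - t - 2 then (1 : Matrix (Fin n) (Fin n) ℂ) else 0 := by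
    unfold FMblk
    rw [if_neg (by omega : ¬ t + 1 = 0), if_neg (by omega : ¬ t + 1 = m)]
    simp only [Fin.ext_iff, Fin.val_mk]
    split_ifs <;> first | rfl | omega
  rw [hb, apply_ite (fun M : Matrix (Fin n) (Fin n) ℂ => (C * M) c p.2),
    Matrix.mul_one, Matrix.mul_zero]
  show _ = eC m n r (m - t - 1) C c p
  simp only [eC, Matrix.of_apply]
  by_cases hc : (p.1 : ℕ) = m - t - 2
  · rw [if_pos hc, if_pos (by omega : (p.1 : ℕ) + 1 = m - t - 1)]
  · rw [if_neg hc, if_neg (by omega : ¬((p.1 : ℕ) + 1 = m - t - 1)), Matrix.zero_apply]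

/-! #### Products of non-interacting Fiedler matrices -/

lemma fixB (hm : 2 ≤ m) (x : List ℕ) (t : ℕ) (ht : t ≤ m - 1)
    (hx : ∀ j ∈ x, 1 ≤ j ∧ j ≤ m - 1 ∧ j ≠ t ∧ j ≠ t + 1) :
    (x.map (FM m n A)).prod * eB m n r (m - t) B = eB m n r (m - t) B := by
  induction x with
  | nil => simp
  | cons a x ih =>
    obtain ⟨h1, h2, h3, h4⟩ := hx a (List.mem_cons_self)
    rw [List.map_cons, List.prod_cons, Matrix.mul_assoc,
      ih fun j hj => hx j (List.mem_cons_of_mem a hj),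
      stepFixB hm a t h1 h2 ht h3 h4]

lemma fixC (hm : 2 ≤ m) (x : List ℕ) (t : ℕ) (ht : t ≤ m - 1)
    (hx : ∀ j ∈ x, 1 ≤ j ∧ j ≤ m - 1 ∧ j ≠ t ∧ j ≠ t + 1) :
    eC m n r (m - t) C * (x.map (FM m n A)).prod = eC m n r (m - t) C := by
  induction x with
  | nil => simp
  | cons a x ih =>
    obtain ⟨h1, h2, h3, h4⟩ := hx a (List.mem_cons_self)
    rw [List.map_cons, List.prod_cons, ← Matrix.mul_assoc,
      stepFixC hm a t h1 h2 ht h3 h4,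
      ih fun j hj => hx j (List.mem_cons_of_mem a hj)]

/-! #### The main column and row lemmas -/

lemma colMain (hm : 2 ≤ m) (u : List ℕ) (hnd : u.Nodup)
    (hrange : ∀ j ∈ u, 1 ≤ j ∧ j ≤ m - 1) (i0 : ℕ) (hi0 : i0 ≤ m - 1)
    (Hmem : ∀ d, 1 ≤ d → d ≤ i0 → d ∈ u)
    (Hord : ∀ d, 1 ≤ d → d < i0 → u.idxOf (d + 1) < u.idxOf d)
    (Htop : i0 + 1 ∈ u → 1 ≤ i0 ∧ u.idxOf i0 < u.idxOf (i0 + 1)) :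
    (u.map (FM m n A)).prod * eB m n r m B = eB m n r (m - i0) B := by
  suffices H : ∀ k, k ≤ i0 →
      (((if i0 - k = 0 then u else u.take (u.idxOf (i0 - k))).map (FM m n A)).prod)
        * eB m n r (m - (i0 - k)) B = eB m n r (m - i0) B by
    have h := H i0 le_rfl
    rw [Nat.sub_self] at h
    simpa using h
  intro k
  induction k with
  | zero =>
    intro _
    rw [Nat.sub_zero]
    refine fixB hm _ i0 (by omega) ?_
    intro j hj
    by_cases h0 : i0 = 0
    · rw [if_pos h0] at hj
      obtain ⟨hr1, hr2⟩ := hrange j hj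
      refine ⟨hr1, hr2, by omega, fun he => ?_⟩
      rw [he, h0] at hj
      exact absurd (Htop (by rwa [h0])).1 (by omega)
    · rw [if_neg h0] at hj
      have hju : j ∈ u := List.take_subset _ _ hj
      obtain ⟨hr1, hr2⟩ := hrange j hju
      refine ⟨hr1, hr2, fun he => ?_, fun he => ?_⟩
      · rw [he] at hj
        exact absurd (aux_mem_take_indexOf hj) (lt_irrefl _)
      · rw [he] at hj hju
        have hlt1 := aux_mem_take_indexOf hj
        have hlt2 := (Htop hju).2
        omega
  | succ k ih =>
    intro hk
    set t := i0 - (k + 1) with htdef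
    have htlt : t < i0 := by omega
    have ht1u : t + 1 ∈ u := Hmem (t + 1) (by omega) (by omega)
    have ha : u.idxOf (t + 1) < u.length := List.idxOf_lt_length_iff.mpr ht1u
    set a := u.idxOf (t + 1) with hadef
    have hget : u[a]'ha = t + 1 := List.getElem_idxOf ha
    have hb' : ∃ b' : ℕ, b' ≤ u.length ∧ a < b' ∧
        (if t = 0 then u else u.take (u.idxOf t)) = u.take b' ∧
        (1 ≤ t → t ∉ u.take b') := by
      by_cases h0 : t = 0
      · exact ⟨u.length, le_rfl, ha, by rw [if_pos h0, List.take_length], by omega⟩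
      · refine ⟨u.idxOf t, List.idxOf_le_length, ?_, by rw [if_neg h0], fun _ hmem => ?_⟩
        · exact Hord t (by omega) htlt
        · exact absurd (aux_mem_take_indexOf hmem) (lt_irrefl _)
    obtain ⟨b', hb'len, hab, hLeq, htnotin⟩ := hb'
    have hdec : u.take b' = u.take a ++ (t + 1) :: (u.drop (a + 1)).take (b' - a - 1) := by
      have h1 : u.take b' = u.take a ++ (u.drop a).take (b' - a) := by
        conv_lhs => rw [show b' = a + (b' - a) by omega]
        exact List.take_add (l := u) (i := a) (j := b' - a)
      rw [h1, List.drop_eq_getElem_cons ha, hget,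
        show b' - a = b' - a - 1 + 1 by omega, List.take_succ_cons]
      simp
    set x := (u.drop (a + 1)).take (b' - a - 1) with hxdef
    have hnd2 : (u.take a ++ (t + 1) :: x).Nodup := by
      rw [← hdec]; exact (List.take_sublist _ _).nodup hnd
    have ht1x : (t + 1) ∉ x := (List.nodup_cons.mp (List.nodup_append'.mp hnd2).2.1).1
    have hxsub : ∀ j ∈ x, j ∈ u.take b' := by
      intro j hj
      rw [hdec]
      exact List.mem_append.mpr (Or.inr (List.mem_cons.mpr (Or.inr hj)))
    have hxcond : ∀ j ∈ x, 1 ≤ j ∧ j ≤ m - 1 ∧ j ≠ t ∧ j ≠ t + 1 := by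
      intro j hj
      have hju : j ∈ u := List.take_subset _ _ (hxsub j hj)
      obtain ⟨hr1, hr2⟩ := hrange j hju
      refine ⟨hr1, hr2, fun he => ?_, fun he => ht1x (he ▸ hj)⟩
      rcases Nat.eq_zero_or_pos t with h0 | h0
      · omega
      · exact htnotin h0 (he ▸ hxsub j hj)
    rw [hLeq, hdec, List.map_append, List.prod_append, List.map_cons, List.prod_cons,
      Matrix.mul_assoc, Matrix.mul_assoc,
      fixB hm x t (by omega) hxcond,
      stepMoveB hm t (by omega)]
    have hgoal := ih (by omega)
    rw [show i0 - k = t + 1 by omega, if_neg (by omega : ¬ t + 1 = 0),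
      show m - (t + 1) = m - t - 1 by omega] at hgoal
    exact hgoal

lemma rowMain (hm : 2 ≤ m) (v : List ℕ) (hnd : v.Nodup)
    (hrange : ∀ j ∈ v, 1 ≤ j ∧ j ≤ m - 1) (c0 : ℕ) (hc0 : c0 ≤ m - 1)
    (Hmem : ∀ d, 1 ≤ d → d ≤ c0 → d ∈ v)
    (Hord : ∀ d, 1 ≤ d → d < c0 → v.idxOf d < v.idxOf (d + 1))
    (Htop : c0 + 1 ∈ v → 1 ≤ c0 ∧ v.idxOf (c0 + 1) < v.idxOf c0) :
    eC m n r m C * (v.map (FM m n A)).prod = eC m n r (m - c0) C := by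
  suffices H : ∀ k, k ≤ c0 →
      eC m n r (m - (c0 - k)) C *
        (((if c0 - k = 0 then v else v.drop (v.idxOf (c0 - k) + 1)).map (FM m n A)).prod)
        = eC m n r (m - c0) C by
    have h := H c0 le_rfl
    rw [Nat.sub_self] at h
    simpa using h
  intro k
  induction k with
  | zero =>
    intro _
    rw [Nat.sub_zero]
    refine fixC hm _ c0 (by omega) ?_
    intro j hj
    by_cases h0 : c0 = 0
    · rw [if_pos h0] at hj
      obtain ⟨hr1, hr2⟩ := hrange j hj
      refine ⟨hr1, hr2, by omega, fun he => ?_⟩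
      rw [he, h0] at hj
      exact absurd (Htop (by rwa [h0])).1 (by omega)
    · rw [if_neg h0] at hj
      have hjv : j ∈ v := List.drop_subset _ _ hj
      obtain ⟨hr1, hr2⟩ := hrange j hjv
      have hgec := aux_mem_drop_ge hnd hj
      refine ⟨hr1, hr2, fun he => ?_, fun he => ?_⟩
      · rw [he] at hgec; omega
      · rw [he] at hgec hjv
        have := (Htop hjv).2
        omega
  | succ k ih =>
    intro hk
    set t := c0 - (k + 1) with htdef
    have htlt : t < c0 := by omega
    have ht1v : t + 1 ∈ v := Hmem (t + 1) (by omega) (by omega)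
    have ha : v.idxOf (t + 1) < v.length := List.idxOf_lt_length_iff.mpr ht1v
    set a := v.idxOf (t + 1) with hadef
    have hget : v[a]'ha = t + 1 := List.getElem_idxOf ha
    have hp' : ∃ p' : ℕ, p' ≤ a ∧
        (if t = 0 then v else v.drop (v.idxOf t + 1)) = v.drop p' ∧
        (1 ≤ t → t ∉ v.drop p') := by
      by_cases h0 : t = 0
      · exact ⟨0, Nat.zero_le _, by rw [if_pos h0, List.drop_zero], by omega⟩
      · refine ⟨v.idxOf t + 1, ?_, by rw [if_neg h0], fun _ hmem => ?_⟩
        · exact Hord t (by omega) htlt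
        · have := aux_mem_drop_ge hnd hmem; omega
    obtain ⟨p', hpa, hLeq, htnotin⟩ := hp'
    have hdec : v.drop p' = (v.drop p').take (a - p') ++ (t + 1) :: v.drop (a + 1) := by
      conv_lhs => rw [← List.take_append_drop (a - p') (v.drop p')]
      congr 1
      rw [List.drop_drop, show p' + (a - p') = a by omega,
        List.drop_eq_getElem_cons ha, hget]
    set y := (v.drop p').take (a - p') with hydef
    have hnd2 : (y ++ (t + 1) :: v.drop (a + 1)).Nodup := by
      rw [← hdec]; exact (List.drop_sublist _ _).nodup hnd
    have ht1y : (t + 1) ∉ y := fun hmem =>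
      (List.nodup_append'.mp hnd2).2.2 hmem (List.mem_cons_self)
    have hycond : ∀ j ∈ y, 1 ≤ j ∧ j ≤ m - 1 ∧ j ≠ t ∧ j ≠ t + 1 := by
      intro j hj
      have hjd : j ∈ v.drop p' := List.take_subset _ _ hj
      obtain ⟨hr1, hr2⟩ := hrange j (List.drop_subset _ _ hjd)
      refine ⟨hr1, hr2, fun he => ?_, fun he => ht1y (he ▸ hj)⟩
      rcases Nat.eq_zero_or_pos t with h0 | h0
      · omega
      · exact htnotin h0 (he ▸ hjd)
    rw [hLeq, hdec, List.map_append, List.prod_append, List.map_cons, List.prod_cons,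
      ← Matrix.mul_assoc, fixC hm y t (by omega) hycond,
      ← Matrix.mul_assoc, stepMoveC hm t (by omega)]
    have hgoal := ih (by omega)
    rw [show c0 - k = t + 1 by omega, if_neg (by omega : ¬ t + 1 = 0),
      show m - (t + 1) = m - t - 1 by omega] at hgoal
    exact hgoal

/-! #### Block structure of products of system Fiedler matrices -/

lemma prodSFMmid (hm : 2 ≤ m) (l : List ℕ) (h : ∀ i ∈ l, 1 ≤ i ∧ i ≤ m - 1) :
    (l.map (SFM m n r A B C D)).prod =
      Matrix.fromBlocks ((l.map (FM m n A)).prod) 0 0 1 := by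
  induction l with
  | nil => simp [← Matrix.fromBlocks_one]
  | cons a l ih =>
    obtain ⟨h1, h2⟩ := h a (List.mem_cons_self)
    rw [List.map_cons, List.prod_cons, List.map_cons, List.prod_cons,
      ih fun i hi => h i (List.mem_cons_of_mem a hi),
      show SFM m n r A B C D a = Matrix.fromBlocks (FM m n A a) 0 0 1 by
        unfold SFM; rw [if_neg (by omega), if_neg (by omega)],
      Matrix.fromBlocks_multiply]
    simp

lemma s1blocks (hm : 2 ≤ m) (l : List ℕ) (h : ∀ i ∈ l, 1 ≤ i) :
    ∃ E : Matrix (Fin r) (Fin r) ℂ,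
      hatS1 m n r A B C D l = Matrix.fromBlocks (hatM1 m n A l) 0 0 E ∧
        (m ∈ l → E = 0) := by
  induction l with
  | nil =>
    refine ⟨1, ?_, by simp⟩
    unfold hatS1 hatM1
    simp [← Matrix.fromBlocks_one]
  | cons a l ih =>
    obtain ⟨E, hE, hmE⟩ := ih fun i hi => h i (List.mem_cons_of_mem a hi)
    have ha1 := h a (List.mem_cons_self)
    have hcons1 : hatS1 m n r A B C D (a :: l) =
        (if a = m then SFM m n r A B C D m else (SFM m n r A B C D a)⁻¹) *
          hatS1 m n r A B C D l := by
      unfold hatS1; rw [List.map_cons, List.prod_cons]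
    have hcons2 : hatM1 m n A (a :: l) =
        (if a = m then FM m n A m else (FM m n A a)⁻¹) * hatM1 m n A l := by
      unfold hatM1; rw [List.map_cons, List.prod_cons]
    by_cases ham : a = m
    · refine ⟨0, ?_, fun _ => rfl⟩
      rw [hcons1, hcons2, if_pos ham, if_pos ham, hE,
        show SFM m n r A B C D m = Matrix.fromBlocks (FM m n A m) 0 0 0 by
          unfold SFM; rw [if_neg (by omega), if_pos rfl],
        Matrix.fromBlocks_multiply]
      simp
    · have hSa : SFM m n r A B C D a = Matrix.fromBlocks (FM m n A a) 0 0 1 := by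
        unfold SFM; rw [if_neg (by omega), if_neg ham]
      by_cases hdet : IsUnit (FM m n A a).det
      · have hinv : (SFM m n r A B C D a)⁻¹ =
            Matrix.fromBlocks (FM m n A a)⁻¹ 0 0 1 := by
          apply Matrix.inv_eq_right_inv
          rw [hSa, Matrix.fromBlocks_multiply]
          simp [Matrix.mul_nonsing_inv _ hdet, ← Matrix.fromBlocks_one]
        refine ⟨E, ?_, fun hma => hmE ((List.mem_cons.mp hma).resolve_left
          fun h' => ham h'.symm)⟩
        rw [hcons1, hcons2, if_neg ham, if_neg ham, hE, hinv, Matrix.fromBlocks_multiply]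
        simp
      · have h1 : (SFM m n r A B C D a)⁻¹ = 0 := by
          apply Matrix.nonsing_inv_apply_not_isUnit
          rw [hSa, Matrix.det_fromBlocks_zero₂₁]
          simpa using hdet
        have h2 : (FM m n A a)⁻¹ = 0 := Matrix.nonsing_inv_apply_not_isUnit _ hdet
        refine ⟨0, ?_, fun _ => rfl⟩
        rw [hcons1, hcons2, if_neg ham, if_neg ham, h1, h2]
        simp

lemma aux_fromBlocks_sub {α β γ δ : Type*} [Fintype α] [Fintype β] [Fintype γ] [Fintype δ]
    (A₁ : Matrix α γ ℂ) (B₁ : Matrix α δ ℂ) (C₁ : Matrix β γ ℂ) (D₁ : Matrix β δ ℂ)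
    (A₂ : Matrix α γ ℂ) (B₂ : Matrix α δ ℂ) (C₂ : Matrix β γ ℂ) (D₂ : Matrix β δ ℂ) :
    Matrix.fromBlocks A₁ B₁ C₁ D₁ - Matrix.fromBlocks A₂ B₂ C₂ D₂ =
      Matrix.fromBlocks (A₁ - A₂) (B₁ - B₂) (C₁ - C₂) (D₁ - D₂) := by
  rw [sub_eq_add_neg, Matrix.fromBlocks_neg, Matrix.fromBlocks_add]
  simp [sub_eq_add_neg]

end Stmt6Aux

/-- the PGF pencil `𝕂_w(λ)` of `G` has the block form
`[[K_w(λ), e_{m−i0} ⊗ B], [e_{m−c0}^T ⊗ C, D]]` where `CIP(w0) = (c0, i0)`. -/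
theorem stmt6 (m n r : ℕ) (hm : 2 ≤ m) (hn : 1 ≤ n) (hr : 1 ≤ r)
    (A : Fin (m + 1) → Matrix (Fin n) (Fin n) ℂ) (hreg : Regular m n A)
    (B : Matrix (Fin n) (Fin r) ℂ) (C : Matrix (Fin r) (Fin n) ℂ)
    (D : Matrix (Fin r) (Fin r) ℂ)
    (w0 w1 : List ℕ) (hw : ProperPerm m w0 w1)
    (c0 i0 : ℕ) (hcip : IsCIP w0 c0 i0) :
    ∀ lam : ℂ,
      SKP m n r A B C D w0 w1 lam =
        Matrix.fromBlocks (KP m n A w0 w1 lam) (eB m n r (m - i0) B)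
          (eC m n r (m - c0) C) D := by
  intro lam
  obtain ⟨hperm, h0w0, hmw1⟩ := hw
  obtain ⟨⟨hconsall, hnocons⟩, hinvall, hnoinv⟩ := hcip
  have ndall : (w0 ++ w1).Nodup := hperm.nodup_iff.mpr List.nodup_range
  obtain ⟨ndw0, ndw1, hdisj⟩ := List.nodup_append'.mp ndall
  have hbound : ∀ x, x ∈ w0 ∨ x ∈ w1 → x ≤ m := by
    intro x hx
    have h1 : x ∈ List.range (m + 1) := hperm.mem_iff.mp (List.mem_append.mpr hx)
    have := List.mem_range.mp h1
    omega
  have hmnw0 : m ∉ w0 := fun h => hdisj h hmw1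
  obtain ⟨u, v, hw0eq⟩ := List.append_of_mem h0w0
  subst hw0eq
  obtain ⟨ndu, nd0v, hdisj2⟩ := List.nodup_append'.mp ndw0
  obtain ⟨h0v, ndv⟩ := List.nodup_cons.mp nd0v
  have h0u : 0 ∉ u := fun h => hdisj2 h (List.mem_cons_self)
  have hu_range : ∀ j ∈ u, 1 ≤ j ∧ j ≤ m - 1 := by
    intro j hj
    have hjw0 : j ∈ u ++ 0 :: v := List.mem_append.mpr (Or.inl hj)
    have h1 := hbound j (Or.inl hjw0)
    have h2 : j ≠ m := fun he => hmnw0 (he ▸ hjw0)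
    have h3 : j ≠ 0 := fun he => h0u (he ▸ hj)
    omega
  have hv_range : ∀ j ∈ v, 1 ≤ j ∧ j ≤ m - 1 := by
    intro j hj
    have hjw0 : j ∈ u ++ 0 :: v := List.mem_append.mpr (Or.inr (List.mem_cons_of_mem 0 hj))
    have h1 := hbound j (Or.inl hjw0)
    have h2 : j ≠ m := fun he => hmnw0 (he ▸ hjw0)
    have h3 : j ≠ 0 := fun he => h0v (he ▸ hj)
    omega
  -- indexOf bookkeeping
  have hidxu : ∀ x ∈ u, (u ++ 0 :: v).idxOf x = u.idxOf x :=
    fun x hx => List.idxOf_append_of_mem hx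
  have hidxnu : ∀ x, x ∉ u → (u ++ 0 :: v).idxOf x = u.length + (0 :: v).idxOf x :=
    fun x hx => List.idxOf_append_of_notMem hx
  have hidx0 : (u ++ 0 :: v).idxOf 0 = u.length := by
    rw [hidxnu 0 h0u, List.idxOf_cons_self]
    omega
  have hidxv : ∀ x, x ∉ u → x ≠ 0 → (u ++ 0 :: v).idxOf x = u.length + 1 + v.idxOf x := by
    intro x hxu hx0
    rw [hidxnu x hxu, List.idxOf_cons_ne _ (fun h => hx0 h.symm)]
    omega
  have memu_of_lt : ∀ x, x ∈ u ++ 0 :: v → (u ++ 0 :: v).idxOf x < u.length → x ∈ u := by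
    intro x hx hlt
    by_contra hnu
    rw [hidxnu x hnu] at hlt
    omega
  have hmemv : ∀ x, x ∈ u ++ 0 :: v → u.length < (u ++ 0 :: v).idxOf x → x ∈ v := by
    intro x hx hgt
    rcases List.mem_append.mp hx with hxu | hx0v
    · rw [hidxu _ hxu] at hgt
      have := List.idxOf_le_length (a := x) (l := u)
      omega
    · rcases List.mem_cons.mp hx0v with rfl | hxv
      · rw [hidx0] at hgt; omega
      · exact hxv
  -- inversion side facts
  have keyInv : ∀ d, 1 ≤ d → d ≤ i0 → d ∈ u ∧ (u ++ 0 :: v).idxOf d < u.length := by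
    intro d
    induction d with
    | zero => intro h; exact absurd h (by omega)
    | succ d ihd =>
      intro _ hdi
      obtain ⟨hd, hd1, hlt⟩ := hinvall d (by omega)
      rcases Nat.eq_zero_or_pos d with rfl | hd0
      · rw [hidx0] at hlt
        exact ⟨memu_of_lt _ hd1 hlt, hlt⟩
      · obtain ⟨_, hdlt⟩ := ihd (by omega) (by omega)
        have hlt2 : (u ++ 0 :: v).idxOf (d + 1) < u.length := lt_trans hlt hdlt
        exact ⟨memu_of_lt _ hd1 hlt2, hlt2⟩
  have HmemU : ∀ d, 1 ≤ d → d ≤ i0 → d ∈ u := fun d h1 h2 => (keyInv d h1 h2).1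
  have HordU : ∀ d, 1 ≤ d → d < i0 → u.idxOf (d + 1) < u.idxOf d := by
    intro d h1 h2
    obtain ⟨_, _, hlt⟩ := hinvall d h2
    have hdu := (keyInv d h1 (by omega)).1
    have hd1u := (keyInv (d + 1) (by omega) (by omega)).1
    rwa [hidxu _ hd1u, hidxu _ hdu] at hlt
  have HtopU : i0 + 1 ∈ u → 1 ≤ i0 ∧ u.idxOf i0 < u.idxOf (i0 + 1) := by
    intro hmem
    have hmemw : i0 + 1 ∈ u ++ 0 :: v := List.mem_append.mpr (Or.inl hmem)
    have hi0pos : 1 ≤ i0 := by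
      by_contra hip
      have hi00 : i0 = 0 := by omega
      apply hnoinv
      rw [hi00] at hmem hmemw ⊢
      refine ⟨h0w0, hmemw, ?_⟩
      rw [hidx0, hidxu _ hmem]
      exact List.idxOf_lt_length_iff.mpr hmem
    refine ⟨hi0pos, ?_⟩
    have hi0u := (keyInv i0 hi0pos le_rfl).1
    have hi0w : i0 ∈ u ++ 0 :: v := List.mem_append.mpr (Or.inl hi0u)
    have hnlt : ¬ ((u ++ 0 :: v).idxOf (i0 + 1) < (u ++ 0 :: v).idxOf i0) :=
      fun hc => hnoinv ⟨hi0w, hmemw, hc⟩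
    have hne : (u ++ 0 :: v).idxOf i0 ≠ (u ++ 0 :: v).idxOf (i0 + 1) := by
      intro he
      have := aux_indexOf_inj hi0w hmemw he
      omega
    rw [hidxu _ hi0u, hidxu _ hmem] at hnlt hne
    omega
  -- consecution side facts
  have keyCons : ∀ d, 1 ≤ d → d ≤ c0 → d ∈ v ∧ u.length < (u ++ 0 :: v).idxOf d := by
    intro d
    induction d with
    | zero => intro h; exact absurd h (by omega)
    | succ d ihd =>
      intro _ hdc
      obtain ⟨hd, hd1, hlt⟩ := hconsall d (by omega)
      rcases Nat.eq_zero_or_pos d with rfl | hd0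
      · rw [hidx0] at hlt
        exact ⟨hmemv _ hd1 hlt, hlt⟩
      · obtain ⟨_, hdlt⟩ := ihd (by omega) (by omega)
        have hlt2 : u.length < (u ++ 0 :: v).idxOf (d + 1) := lt_trans hdlt hlt
        exact ⟨hmemv _ hd1 hlt2, hlt2⟩
  have HmemV : ∀ d, 1 ≤ d → d ≤ c0 → d ∈ v := fun d h1 h2 => (keyCons d h1 h2).1
  have hnotu : ∀ x ∈ v, x ∉ u := fun x hxv hxu => hdisj2 hxu (List.mem_cons_of_mem 0 hxv)
  have HordV : ∀ d, 1 ≤ d → d < c0 → v.idxOf d < v.idxOf (d + 1) := by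
    intro d h1 h2
    obtain ⟨_, _, hlt⟩ := hconsall d h2
    have hdv := (keyCons d h1 (by omega)).1
    have hd1v := (keyCons (d + 1) (by omega) (by omega)).1
    rw [hidxv d (hnotu d hdv) (by omega), hidxv (d + 1) (hnotu _ hd1v) (by omega)] at hlt
    omega
  have HtopV : c0 + 1 ∈ v → 1 ≤ c0 ∧ v.idxOf (c0 + 1) < v.idxOf c0 := by
    intro hmem
    have hmemw : c0 + 1 ∈ u ++ 0 :: v :=
      List.mem_append.mpr (Or.inr (List.mem_cons_of_mem 0 hmem))
    have hc0pos : 1 ≤ c0 := by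
      by_contra hcp
      have hc00 : c0 = 0 := by omega
      apply hnocons
      rw [hc00] at hmem hmemw ⊢
      refine ⟨h0w0, hmemw, ?_⟩
      rw [hidx0, hidxv 1 (hnotu 1 hmem) (by omega)]
      omega
    refine ⟨hc0pos, ?_⟩
    have hc0v := (keyCons c0 hc0pos le_rfl).1
    have hc0w : c0 ∈ u ++ 0 :: v :=
      List.mem_append.mpr (Or.inr (List.mem_cons_of_mem 0 hc0v))
    have hnlt : ¬ ((u ++ 0 :: v).idxOf c0 < (u ++ 0 :: v).idxOf (c0 + 1)) :=
      fun hc => hnocons ⟨hc0w, hmemw, hc⟩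
    have hne : (u ++ 0 :: v).idxOf c0 ≠ (u ++ 0 :: v).idxOf (c0 + 1) := by
      intro he
      have := aux_indexOf_inj hc0w hmemw he
      omega
    rw [hidxv c0 (hnotu _ hc0v) (by omega), hidxv (c0 + 1) (hnotu _ hmem) (by omega)]
      at hnlt hne
    omega
  have hi0m : i0 ≤ m - 1 := by
    rcases Nat.eq_zero_or_pos i0 with rfl | hp
    · omega
    · exact (hu_range i0 (HmemU i0 hp le_rfl)).2
  have hc0m : c0 ≤ m - 1 := by
    rcases Nat.eq_zero_or_pos c0 with rfl | hp
    · omega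
    · exact (hv_range c0 (HmemV c0 hp le_rfl)).2
  have hMu := colMain (A := A) (B := B) (r := r) hm u ndu hu_range i0 hi0m HmemU HordU HtopU
  have hMv := rowMain (A := A) (C := C) (r := r) hm v ndv hv_range c0 hc0m HmemV HordV HtopV
  -- block form of hatS1
  have hw1cond : ∀ i ∈ w1, 1 ≤ i := by
    intro i hi
    rcases Nat.eq_zero_or_pos i with rfl | hp
    · exact absurd hi (hdisj h0w0)
    · exact hp
  obtain ⟨E, hE, hmE⟩ := s1blocks (A := A) (B := B) (C := C) (D := D) hm w1 hw1cond
  have hS1 : hatS1 m n r A B C D w1 = Matrix.fromBlocks (hatM1 m n A w1) 0 0 0 := by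
    rw [hE, hmE hmw1]
  -- block form of hatS0
  have hS0 : hatS0 m n r A B C D (u ++ 0 :: v) =
      Matrix.fromBlocks (hatM0 m n A (u ++ 0 :: v)) (-(eB m n r (m - i0) B))
        (-(eC m n r (m - c0) C)) (-D) := by
    unfold hatS0 hatM0
    rw [List.map_append, List.prod_append, List.map_cons, List.prod_cons,
      List.map_append, List.prod_append, List.map_cons, List.prod_cons,
      prodSFMmid hm u hu_range, prodSFMmid hm v hv_range,
      show SFM m n r A B C D 0 =
          Matrix.fromBlocks (FM m n A 0) (-(eB m n r m B)) (-(eC m n r m C)) (-D) by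
        unfold SFM; rw [if_pos rfl],
      Matrix.fromBlocks_multiply, Matrix.fromBlocks_multiply]
    simp only [Matrix.mul_zero, Matrix.zero_mul, Matrix.mul_one, Matrix.one_mul,
      add_zero, zero_add, Matrix.mul_neg, Matrix.neg_mul]
    rw [hMu, hMv]
    simp
  -- conclusion
  unfold SKP
  rw [hS1, hS0, Matrix.fromBlocks_smul, aux_fromBlocks_sub]
  simp only [smul_zero, zero_sub, neg_neg, sub_neg_eq_add, zero_add]
  rfl

end
end

section
/- Let w = (w_0, w_1) be a proper permutation of {0,1,…,m}, and assume B ≠ 0 and C ≠ 0. Then the PGF pencil 𝕂_w(λ) of G is block tridiagonal if and only if the PGF pencil K_w(λ) of P is block tridiagonal and CIP(w_0) = (0, 0); in that case 𝕂_w(λ) = [[K_w(λ), e_m ⊗ B],[e_m^T ⊗ C, D]]. -/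
open Matrix
open Fin.NatCast

noncomputable section

section Aux

variable {m n r : ℕ}

lemma sum_two {M : Type*} [AddCommMonoid M] {k : ℕ} (u v : Fin k) (huv : u ≠ v)
    (h : Fin k → M) (h0 : ∀ c, c ≠ u → c ≠ v → h c = 0) :
    ∑ c, h c = h u + h v := by
  rw [← Finset.sum_pair huv]
  refine (Finset.sum_subset (Finset.subset_univ _) ?_).symm
  intro c _ hc
  simp only [Finset.mem_insert, Finset.mem_singleton, not_or] at hc
  exact h0 c hc.1 hc.2

/-- block entry function of `FM`. -/
def fmb (m n : ℕ) (A : Fin (m + 1) → Matrix (Fin n) (Fin n) ℂ) (i : ℕ) (a b : Fin m) :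
    Matrix (Fin n) (Fin n) ℂ :=
  if i = 0 then
    if a = b then (if (a : ℕ) = m - 1 then -A 0 else (1 : Matrix (Fin n) (Fin n) ℂ)) else 0
  else if i = m then
    if a = b then (if (a : ℕ) = 0 then A (m : Fin (m + 1)) else 1) else 0
  else
    if (a : ℕ) = m - i - 1 ∧ (b : ℕ) = m - i - 1 then -A (i : Fin (m + 1))
    else if (a : ℕ) = m - i - 1 ∧ (b : ℕ) = m - i then 1
    else if (a : ℕ) = m - i ∧ (b : ℕ) = m - i - 1 then 1
    else if (a : ℕ) = m - i ∧ (b : ℕ) = m - i then 0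
    else if a = b then 1 else 0

lemma FM_apply (A : Fin (m + 1) → Matrix (Fin n) (Fin n) ℂ) (i : ℕ) (a b : Fin m)
    (x y : Fin n) : FM m n A i (a, x) (b, y) = fmb m n A i a b x y := rfl

/-- explicit inverse of `FM i` for `1 ≤ i ≤ m - 1`. -/
def GM (m n : ℕ) (A : Fin (m + 1) → Matrix (Fin n) (Fin n) ℂ) (i : ℕ) :
    Matrix (Fin m × Fin n) (Fin m × Fin n) ℂ :=
  Matrix.of fun p q =>
    (if (p.1 : ℕ) = m - i - 1 ∧ (q.1 : ℕ) = m - i - 1 then 0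
     else if (p.1 : ℕ) = m - i - 1 ∧ (q.1 : ℕ) = m - i then 1
     else if (p.1 : ℕ) = m - i ∧ (q.1 : ℕ) = m - i - 1 then 1
     else if (p.1 : ℕ) = m - i ∧ (q.1 : ℕ) = m - i then A (i : Fin (m + 1))
     else if p.1 = q.1 then 1 else 0) p.2 q.2

def gmb (m n : ℕ) (A : Fin (m + 1) → Matrix (Fin n) (Fin n) ℂ) (i : ℕ) (a b : Fin m) :
    Matrix (Fin n) (Fin n) ℂ :=
  if (a : ℕ) = m - i - 1 ∧ (b : ℕ) = m - i - 1 then 0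
  else if (a : ℕ) = m - i - 1 ∧ (b : ℕ) = m - i then 1
  else if (a : ℕ) = m - i ∧ (b : ℕ) = m - i - 1 then 1
  else if (a : ℕ) = m - i ∧ (b : ℕ) = m - i then A (i : Fin (m + 1))
  else if a = b then 1 else 0

lemma GM_apply (A : Fin (m + 1) → Matrix (Fin n) (Fin n) ℂ) (i : ℕ) (a b : Fin m)
    (x y : Fin n) : GM m n A i (a, x) (b, y) = gmb m n A i a b x y := rfl

lemma mul_entry_block (F G : Matrix (Fin m × Fin n) (Fin m × Fin n) ℂ)
    (f g : Fin m → Fin m → Matrix (Fin n) (Fin n) ℂ)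
    (hF : ∀ a b x y, F (a, x) (b, y) = f a b x y)
    (hG : ∀ a b x y, G (a, x) (b, y) = g a b x y)
    (a b : Fin m) (x y : Fin n) :
    (F * G) (a, x) (b, y) = (∑ c, f a c * g c b) x y := by
  rw [Matrix.mul_apply, Fintype.sum_prod_type, Matrix.sum_apply]
  refine Finset.sum_congr rfl fun c _ => ?_
  rw [Matrix.mul_apply]
  refine Finset.sum_congr rfl fun k _ => ?_
  rw [hF, hG]

lemma one_pair (a b : Fin m) (x y : Fin n) :
    (1 : Matrix (Fin m × Fin n) (Fin m × Fin n) ℂ) (a, x) (b, y)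
      = (if a = b then (1 : Matrix (Fin n) (Fin n) ℂ) else 0) x y := by
  by_cases h : a = b <;> by_cases h2 : x = y <;>
    simp [Matrix.one_apply, Prod.ext_iff, h, h2]

lemma fmb_mid (A : Fin (m + 1) → Matrix (Fin n) (Fin n) ℂ) {i : ℕ} (h1 : 1 ≤ i)
    (h2 : i ≤ m - 1) (hm : 2 ≤ m) (a b : Fin m) :
    fmb m n A i a b =
      if (a : ℕ) = m - i - 1 ∧ (b : ℕ) = m - i - 1 then -A (i : Fin (m + 1))
      else if (a : ℕ) = m - i - 1 ∧ (b : ℕ) = m - i then 1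
      else if (a : ℕ) = m - i ∧ (b : ℕ) = m - i - 1 then 1
      else if (a : ℕ) = m - i ∧ (b : ℕ) = m - i then 0
      else if a = b then 1 else 0 := by
  unfold fmb
  rw [if_neg (by omega), if_neg (by omega)]

lemma FM_GM_block (hm : 2 ≤ m) (A : Fin (m + 1) → Matrix (Fin n) (Fin n) ℂ) {i : ℕ}
    (h1 : 1 ≤ i) (h2 : i ≤ m - 1) (a b : Fin m) :
    (∑ c, fmb m n A i a c * gmb m n A i c b) =
      if a = b then (1 : Matrix (Fin n) (Fin n) ℂ) else 0 := by
  have hvm : m - i < m := by omega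
  have hum : m - i - 1 < m := by omega
  set cu : Fin m := ⟨m - i - 1, hum⟩ with hcu
  set cv : Fin m := ⟨m - i, hvm⟩ with hcv
  have huv : cu ≠ cv := by simp [Fin.ext_iff, hcu, hcv]; omega
  by_cases hau : (a : ℕ) = m - i - 1
  · rw [sum_two cu cv huv _ ?_]
    · have e1 : fmb m n A i a cu = -A (i : Fin (m + 1)) := by
        rw [fmb_mid A h1 h2 hm, if_pos ⟨hau, rfl⟩]
      have e2 : fmb m n A i a cv = 1 := by
        rw [fmb_mid A h1 h2 hm, if_neg (by simp [hcv]; omega), if_pos ⟨hau, rfl⟩]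
      rw [e1, e2, one_mul]
      by_cases hbu : (b : ℕ) = m - i - 1
      · have g1 : gmb m n A i cu b = 0 := by rw [gmb, if_pos ⟨rfl, hbu⟩]
        have g2 : gmb m n A i cv b = 1 := by
          rw [gmb, if_neg (by simp [hcv]; omega), if_neg (by simp [hcv]; omega),
            if_pos ⟨rfl, hbu⟩]
        rw [g1, g2, mul_zero, zero_add, if_pos (by rw [Fin.ext_iff]; omega)]
      · by_cases hbv : (b : ℕ) = m - i
        · have g1 : gmb m n A i cu b = 1 := by
            rw [gmb, if_neg (by simp; omega), if_pos ⟨rfl, hbv⟩]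
          have g2 : gmb m n A i cv b = A (i : Fin (m + 1)) := by
            rw [gmb, if_neg (by simp [hcv]; omega), if_neg (by simp [hcv]; omega),
              if_neg (by simp; omega), if_pos ⟨rfl, hbv⟩]
          rw [g1, g2, mul_one, if_neg (by rw [Fin.ext_iff]; omega)]
          simp
        · have g1 : gmb m n A i cu b = 0 := by
            rw [gmb, if_neg (by simp; omega), if_neg (by simp; omega),
              if_neg (by simp [hcu]; omega), if_neg (by simp [hcu]; omega),
              if_neg (by rw [Fin.ext_iff]; simp [hcu]; omega)]
          have g2 : gmb m n A i cv b = 0 := by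
            rw [gmb, if_neg (by simp [hcv]; omega), if_neg (by simp [hcv]; omega),
              if_neg (by simp [hcv]; omega), if_neg (by simp [hcv]; omega),
              if_neg (by rw [Fin.ext_iff]; simp [hcv]; omega)]
          rw [g1, g2, mul_zero, zero_add, if_neg (by rw [Fin.ext_iff]; omega)]
    · intro c hc1 hc2
      have hcn1 : (c : ℕ) ≠ m - i - 1 := fun h => hc1 (by rw [Fin.ext_iff]; simp [hcu, h])
      have hcn2 : (c : ℕ) ≠ m - i := fun h => hc2 (by rw [Fin.ext_iff]; simp [hcv, h])
      have : fmb m n A i a c = 0 := by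
        rw [fmb_mid A h1 h2 hm, if_neg (by omega), if_neg (by omega), if_neg (by omega),
          if_neg (by omega), if_neg (by rw [Fin.ext_iff]; omega)]
      rw [this, zero_mul]
  · by_cases hav : (a : ℕ) = m - i
    · rw [sum_two cu cv huv _ ?_]
      · have e1 : fmb m n A i a cu = 1 := by
          rw [fmb_mid A h1 h2 hm, if_neg (by omega), if_neg (by simp [hcu]; omega),
            if_pos ⟨hav, rfl⟩]
        have e2 : fmb m n A i a cv = 0 := by
          rw [fmb_mid A h1 h2 hm, if_neg (by omega), if_neg (by omega),
            if_neg (by simp [hcv]; omega), if_pos ⟨hav, rfl⟩]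
        rw [e1, e2, one_mul, zero_mul, add_zero]
        by_cases hbu : (b : ℕ) = m - i - 1
        · rw [gmb, if_pos ⟨rfl, hbu⟩, if_neg (by rw [Fin.ext_iff]; omega)]
        · by_cases hbv : (b : ℕ) = m - i
          · rw [gmb, if_neg (by simp; omega), if_pos ⟨rfl, hbv⟩,
              if_pos (by rw [Fin.ext_iff]; omega)]
          · rw [gmb, if_neg (by simp; omega), if_neg (by simp; omega),
              if_neg (by simp [hcu]; omega), if_neg (by simp [hcu]; omega),
              if_neg (by rw [Fin.ext_iff]; simp [hcu]; omega),
              if_neg (by rw [Fin.ext_iff]; omega)]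
      · intro c hc1 hc2
        have hcn1 : (c : ℕ) ≠ m - i - 1 := fun h => hc1 (by rw [Fin.ext_iff]; simp [hcu, h])
        have hcn2 : (c : ℕ) ≠ m - i := fun h => hc2 (by rw [Fin.ext_iff]; simp [hcv, h])
        have : fmb m n A i a c = 0 := by
          rw [fmb_mid A h1 h2 hm, if_neg (by omega), if_neg (by omega), if_neg (by omega),
            if_neg (by omega), if_neg (by rw [Fin.ext_iff]; omega)]
        rw [this, zero_mul]
    · have hfa : ∀ c, fmb m n A i a c = if a = c then 1 else 0 := by
        intro c
        rw [fmb_mid A h1 h2 hm, if_neg (by omega), if_neg (by omega), if_neg (by omega),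
          if_neg (by omega)]
      have : ∀ c, fmb m n A i a c * gmb m n A i c b
          = if c = a then gmb m n A i a b else 0 := by
        intro c
        rw [hfa c]
        by_cases h : a = c
        · subst h; rw [if_pos rfl, if_pos rfl, one_mul]
        · rw [if_neg h, if_neg (Ne.symm h), zero_mul]
      rw [Finset.sum_congr rfl fun c _ => this c]
      simp only [Finset.sum_ite_eq' Finset.univ, Finset.mem_univ, if_true]
      rw [gmb, if_neg (by omega), if_neg (by omega), if_neg (by omega), if_neg (by omega)]

lemma FM_mul_GM (hm : 2 ≤ m) (A : Fin (m + 1) → Matrix (Fin n) (Fin n) ℂ) {i : ℕ}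
    (h1 : 1 ≤ i) (h2 : i ≤ m - 1) :
    FM m n A i * GM m n A i = 1 := by
  ext p q
  obtain ⟨a, x⟩ := p
  obtain ⟨b, y⟩ := q
  rw [mul_entry_block (FM m n A i) (GM m n A i) (fmb m n A i) (gmb m n A i)
    (FM_apply A i) (GM_apply A i), FM_GM_block hm A h1 h2, ← one_pair]




variable {m n r : ℕ}

lemma FM_row_last (hm : 2 ≤ m) (A : Fin (m + 1) → Matrix (Fin n) (Fin n) ℂ) {i : ℕ}
    (h1 : 2 ≤ i) (h2 : i ≤ m) {p : Fin m × Fin n} (hp : (p.1 : ℕ) = m - 1)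
    (q : Fin m × Fin n) :
    FM m n A i p q = (1 : Matrix (Fin m × Fin n) (Fin m × Fin n) ℂ) p q := by
  obtain ⟨a, x⟩ := p
  obtain ⟨b, y⟩ := q
  rw [FM_apply, one_pair]
  simp only at hp
  by_cases him : i = m
  · subst him
    rw [fmb, if_neg (by omega), if_pos rfl]
    by_cases hab : a = b
    · rw [if_pos hab, if_neg (by omega), if_pos hab]
    · rw [if_neg hab, if_neg hab]
  · rw [fmb_mid A (by omega) (by omega) hm, if_neg (by omega), if_neg (by omega),
      if_neg (by omega), if_neg (by omega)]

lemma FM_col_last (hm : 2 ≤ m) (A : Fin (m + 1) → Matrix (Fin n) (Fin n) ℂ) {i : ℕ}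
    (h1 : 2 ≤ i) (h2 : i ≤ m) (p : Fin m × Fin n) {q : Fin m × Fin n}
    (hq : (q.1 : ℕ) = m - 1) :
    FM m n A i p q = (1 : Matrix (Fin m × Fin n) (Fin m × Fin n) ℂ) p q := by
  obtain ⟨a, x⟩ := p
  obtain ⟨b, y⟩ := q
  rw [FM_apply, one_pair]
  simp only at hq
  by_cases him : i = m
  · subst him
    rw [fmb, if_neg (by omega), if_pos rfl]
    by_cases hab : a = b
    · rw [if_pos hab, if_neg (by rw [hab]; omega), if_pos hab]
    · rw [if_neg hab, if_neg hab]
  · rw [fmb_mid A (by omega) (by omega) hm, if_neg (by omega), if_neg (by omega),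
      if_neg (by omega), if_neg (by omega)]

lemma prod_row_last (hm : 2 ≤ m) (A : Fin (m + 1) → Matrix (Fin n) (Fin n) ℂ)
    (L : List ℕ) (hL : ∀ i ∈ L, 2 ≤ i ∧ i ≤ m) {p : Fin m × Fin n}
    (hp : (p.1 : ℕ) = m - 1) (q : Fin m × Fin n) :
    ((L.map (FM m n A)).prod) p q = (1 : Matrix (Fin m × Fin n) (Fin m × Fin n) ℂ) p q := by
  induction L with
  | nil => simp
  | cons i L ih =>
    rw [List.map_cons, List.prod_cons, Matrix.mul_apply]
    have hstep : ∀ k, FM m n A i p k * ((L.map (FM m n A)).prod) k q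
        = if p = k then ((L.map (FM m n A)).prod) k q else 0 := by
      intro k
      rw [FM_row_last hm A (hL i List.mem_cons_self).1 (hL i List.mem_cons_self).2 hp,
        Matrix.one_apply]
      split_ifs <;> simp
    rw [Finset.sum_congr rfl fun k _ => hstep k]
    simp only [Finset.sum_ite_eq, Finset.mem_univ, if_true]
    exact ih fun j hj => hL j (List.mem_cons_of_mem i hj)

lemma prod_col_last (hm : 2 ≤ m) (A : Fin (m + 1) → Matrix (Fin n) (Fin n) ℂ)
    (L : List ℕ) (hL : ∀ i ∈ L, 2 ≤ i ∧ i ≤ m) (p : Fin m × Fin n) {q : Fin m × Fin n}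
    (hq : (q.1 : ℕ) = m - 1) :
    ((L.map (FM m n A)).prod) p q = (1 : Matrix (Fin m × Fin n) (Fin m × Fin n) ℂ) p q := by
  induction L generalizing p with
  | nil => simp
  | cons i L ih =>
    rw [List.map_cons, List.prod_cons, Matrix.mul_apply]
    have hstep : ∀ k, FM m n A i p k * ((L.map (FM m n A)).prod) k q
        = if k = q then FM m n A i p k else 0 := by
      intro k
      rw [ih (fun j hj => hL j (List.mem_cons_of_mem i hj)) k, Matrix.one_apply]
      split_ifs <;> simp
    rw [Finset.sum_congr rfl fun k _ => hstep k]
    simp only [Finset.sum_ite_eq', Finset.mem_univ, if_true]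
    exact FM_col_last hm A (hL i List.mem_cons_self).1 (hL i List.mem_cons_self).2 p hq

lemma FM_one_last_last (hm : 2 ≤ m) (A : Fin (m + 1) → Matrix (Fin n) (Fin n) ℂ)
    {p q : Fin m × Fin n} (hp : (p.1 : ℕ) = m - 1) (hq : (q.1 : ℕ) = m - 1) :
    FM m n A 1 p q = 0 := by
  obtain ⟨a, x⟩ := p
  obtain ⟨b, y⟩ := q
  simp only at hp hq
  rw [FM_apply, fmb_mid A le_rfl (by omega) hm, if_neg (by omega), if_neg (by omega),
    if_neg (by omega), if_pos (by omega)]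
  rfl

lemma prod_key_zero (hm : 2 ≤ m) (A : Fin (m + 1) → Matrix (Fin n) (Fin n) ℂ)
    (P Q : List ℕ) (hP : ∀ i ∈ P, 2 ≤ i ∧ i ≤ m) (hQ : ∀ i ∈ Q, 2 ≤ i ∧ i ≤ m)
    {p q : Fin m × Fin n} (hp : (p.1 : ℕ) = m - 1) (hq : (q.1 : ℕ) = m - 1) :
    (((P ++ 1 :: Q).map (FM m n A)).prod) p q = 0 := by
  rw [List.map_append, List.prod_append, List.map_cons, List.prod_cons, Matrix.mul_apply]
  have e1 : ∀ k, ((P.map (FM m n A)).prod) p k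
      * (FM m n A 1 * (Q.map (FM m n A)).prod) k q
      = if p = k then (FM m n A 1 * (Q.map (FM m n A)).prod) k q else 0 := by
    intro k
    rw [prod_row_last hm A P hP hp k, Matrix.one_apply]
    split_ifs <;> simp
  rw [Finset.sum_congr rfl fun k _ => e1 k]
  simp only [Finset.sum_ite_eq, Finset.mem_univ, if_true]
  rw [Matrix.mul_apply]
  have e2 : ∀ k, FM m n A 1 p k * ((Q.map (FM m n A)).prod) k q
      = if k = q then FM m n A 1 p k else 0 := by
    intro k
    rw [prod_col_last hm A Q hQ k hq, Matrix.one_apply]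
    split_ifs <;> simp
  rw [Finset.sum_congr rfl fun k _ => e2 k]
  simp only [Finset.sum_ite_eq', Finset.mem_univ, if_true]
  exact FM_one_last_last hm A hp hq

lemma FM_isUnit (hm : 2 ≤ m) (A : Fin (m + 1) → Matrix (Fin n) (Fin n) ℂ) {i : ℕ}
    (h1 : 1 ≤ i) (h2 : i ≤ m - 1) : IsUnit (FM m n A i) := by
  rw [Matrix.isUnit_iff_isUnit_det]
  refine IsUnit.of_mul_eq_one (GM m n A i).det ?_
  rw [← Matrix.det_mul, FM_mul_GM hm A h1 h2, Matrix.det_one]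

lemma prod_FM_isUnit (hm : 2 ≤ m) (A : Fin (m + 1) → Matrix (Fin n) (Fin n) ℂ)
    (L : List ℕ) (hL : ∀ i ∈ L, 1 ≤ i ∧ i ≤ m - 1) :
    IsUnit ((L.map (FM m n A)).prod) := by
  refine List.prod_isUnit ?_
  intro M hM
  obtain ⟨i, hi, rfl⟩ := List.mem_map.1 hM
  exact FM_isUnit hm A (hL i hi).1 (hL i hi).2

end Aux


section Aux3

variable {m n r : ℕ}

lemma list_prod_zero {M : Type*} [MonoidWithZero M] (l : List M) (h : (0 : M) ∈ l) :
    l.prod = 0 := by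
  obtain ⟨s, t, rfl⟩ := List.append_of_mem h
  simp [List.prod_append]

lemma listProdBlocks (f : ℕ → Matrix (Fin m × Fin n) (Fin m × Fin n) ℂ)
    (g : ℕ → Matrix (Fin r) (Fin r) ℂ) (l : List ℕ) :
    (l.map fun i => Matrix.fromBlocks (f i) 0 0 (g i)).prod
      = Matrix.fromBlocks (l.map f).prod 0 0 (l.map g).prod := by
  induction l with
  | nil => simp [Matrix.fromBlocks_one]
  | cons i l ih =>
    simp only [List.map_cons, List.prod_cons, ih, Matrix.fromBlocks_multiply]
    simp

lemma SFM_mid (A : Fin (m + 1) → Matrix (Fin n) (Fin n) ℂ)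
    (B : Matrix (Fin n) (Fin r) ℂ) (C : Matrix (Fin r) (Fin n) ℂ)
    (D : Matrix (Fin r) (Fin r) ℂ) {i : ℕ} (h1 : 1 ≤ i) (h2 : i ≤ m - 1) (hm : 2 ≤ m) :
    SFM m n r A B C D i = Matrix.fromBlocks (FM m n A i) 0 0 1 := by
  rw [SFM, if_neg (by omega), if_neg (by omega)]

lemma SFM_mid_inv (A : Fin (m + 1) → Matrix (Fin n) (Fin n) ℂ)
    (B : Matrix (Fin n) (Fin r) ℂ) (C : Matrix (Fin r) (Fin n) ℂ)
    (D : Matrix (Fin r) (Fin r) ℂ) {i : ℕ} (h1 : 1 ≤ i) (h2 : i ≤ m - 1) (hm : 2 ≤ m) :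
    (SFM m n r A B C D i)⁻¹ = Matrix.fromBlocks ((FM m n A i)⁻¹) 0 0 1 := by
  have hinv : (FM m n A i)⁻¹ = GM m n A i :=
    Matrix.inv_eq_right_inv (FM_mul_GM hm A h1 h2)
  rw [hinv, SFM_mid A B C D h1 h2 hm]
  refine Matrix.inv_eq_right_inv ?_
  rw [Matrix.fromBlocks_multiply]
  simp [FM_mul_GM hm A h1 h2, Matrix.fromBlocks_one]

lemma hatS1_eq (hm : 2 ≤ m) (A : Fin (m + 1) → Matrix (Fin n) (Fin n) ℂ)
    (B : Matrix (Fin n) (Fin r) ℂ) (C : Matrix (Fin r) (Fin n) ℂ)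
    (D : Matrix (Fin r) (Fin r) ℂ) (w1 : List ℕ)
    (hw1 : ∀ i ∈ w1, 1 ≤ i ∧ i ≤ m) (hmem : m ∈ w1) :
    hatS1 m n r A B C D w1 = Matrix.fromBlocks (hatM1 m n A w1) 0 0 0 := by
  have hmap : w1.map (fun i => if i = m then SFM m n r A B C D m else (SFM m n r A B C D i)⁻¹)
      = w1.map (fun i => Matrix.fromBlocks
          (if i = m then FM m n A m else (FM m n A i)⁻¹) 0 0
          (if i = m then (0 : Matrix (Fin r) (Fin r) ℂ) else 1)) := by
    refine List.map_congr_left fun i hi => ?_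
    by_cases him : i = m
    · subst him
      rw [if_pos rfl, if_pos rfl, if_pos rfl, SFM, if_neg (by omega), if_pos rfl]
    · rw [if_neg him, if_neg him, if_neg him,
        SFM_mid_inv A B C D (hw1 i hi).1 (by have := (hw1 i hi).2; omega) hm]
  rw [hatS1, hmap, listProdBlocks]
  have hz : (w1.map fun i => if i = m then (0 : Matrix (Fin r) (Fin r) ℂ) else 1).prod = 0 := by
    refine list_prod_zero _ ?_
    exact List.mem_map.2 ⟨m, hmem, by rw [if_pos rfl]⟩
  rw [hz, hatM1]

lemma hatS0_eq (hm : 2 ≤ m) (A : Fin (m + 1) → Matrix (Fin n) (Fin n) ℂ)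
    (B : Matrix (Fin n) (Fin r) ℂ) (C : Matrix (Fin r) (Fin n) ℂ)
    (D : Matrix (Fin r) (Fin r) ℂ) (L0 R0 : List ℕ)
    (hL0 : ∀ i ∈ L0, 1 ≤ i ∧ i ≤ m - 1) (hR0 : ∀ i ∈ R0, 1 ≤ i ∧ i ≤ m - 1) :
    hatS0 m n r A B C D (L0 ++ 0 :: R0) =
      Matrix.fromBlocks (hatM0 m n A (L0 ++ 0 :: R0))
        (-((L0.map (FM m n A)).prod * eB m n r m B))
        (-(eC m n r m C * (R0.map (FM m n A)).prod)) (-D) := by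
  have hLmap : L0.map (SFM m n r A B C D)
      = L0.map (fun i => Matrix.fromBlocks (FM m n A i) 0 0 (1 : Matrix (Fin r) (Fin r) ℂ)) :=
    List.map_congr_left fun i hi => SFM_mid A B C D (hL0 i hi).1 (hL0 i hi).2 hm
  have hRmap : R0.map (SFM m n r A B C D)
      = R0.map (fun i => Matrix.fromBlocks (FM m n A i) 0 0 (1 : Matrix (Fin r) (Fin r) ℂ)) :=
    List.map_congr_left fun i hi => SFM_mid A B C D (hR0 i hi).1 (hR0 i hi).2 hm
  have hone : ∀ (L : List ℕ), (L.map fun _ : ℕ => (1 : Matrix (Fin r) (Fin r) ℂ)).prod = 1 := by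
    intro L
    refine List.prod_eq_one fun x hx => ?_
    obtain ⟨i, _, rfl⟩ := List.mem_map.1 hx
    rfl
  have hS0 : SFM m n r A B C D 0
      = Matrix.fromBlocks (FM m n A 0) (-(eB m n r m B)) (-(eC m n r m C)) (-D) := by
    rw [SFM, if_pos rfl]
  rw [hatS0, hatM0, List.map_append, List.prod_append, List.map_cons, List.prod_cons,
    List.map_append, List.prod_append, List.map_cons, List.prod_cons,
    hLmap, hRmap, listProdBlocks, listProdBlocks, hone, hone, hS0,
    Matrix.fromBlocks_multiply, Matrix.fromBlocks_multiply]
  simp [Matrix.mul_assoc]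

lemma SKP_eq (hm : 2 ≤ m) (A : Fin (m + 1) → Matrix (Fin n) (Fin n) ℂ)
    (B : Matrix (Fin n) (Fin r) ℂ) (C : Matrix (Fin r) (Fin n) ℂ)
    (D : Matrix (Fin r) (Fin r) ℂ) (L0 R0 w1 : List ℕ)
    (hL0 : ∀ i ∈ L0, 1 ≤ i ∧ i ≤ m - 1) (hR0 : ∀ i ∈ R0, 1 ≤ i ∧ i ≤ m - 1)
    (hw1 : ∀ i ∈ w1, 1 ≤ i ∧ i ≤ m) (hmem : m ∈ w1) (lam : ℂ) :
    SKP m n r A B C D (L0 ++ 0 :: R0) w1 lam =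
      Matrix.fromBlocks (KP m n A (L0 ++ 0 :: R0) w1 lam)
        ((L0.map (FM m n A)).prod * eB m n r m B)
        (eC m n r m C * (R0.map (FM m n A)).prod) D := by
  rw [SKP, hatS1_eq hm A B C D w1 hw1 hmem, hatS0_eq hm A B C D L0 R0 hL0 hR0, KP]
  rw [Matrix.fromBlocks_smul]
  ext x y
  rcases x with x | x <;> rcases y with y | y <;>
    simp [Matrix.sub_apply, Matrix.smul_apply]

end Aux3


section Aux4

variable {m n r : ℕ}

lemma eB_apply (B : Matrix (Fin n) (Fin r) ℂ) (j : ℕ) (q : Fin m × Fin n) (s : Fin r) :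
    eB m n r j B q s = if (q.1 : ℕ) + 1 = j then B q.2 s else 0 := rfl

lemma eC_apply (C : Matrix (Fin r) (Fin n) ℂ) (j : ℕ) (s : Fin r) (q : Fin m × Fin n) :
    eC m n r j C s q = if (q.1 : ℕ) + 1 = j then C s q.2 else 0 := rfl

lemma mul_eB_col (hm : 2 ≤ m) (X : Matrix (Fin m × Fin n) (Fin m × Fin n) ℂ)
    (hcol : ∀ p q : Fin m × Fin n, (q.1 : ℕ) = m - 1 →
      X p q = (1 : Matrix (Fin m × Fin n) (Fin m × Fin n) ℂ) p q)
    (B : Matrix (Fin n) (Fin r) ℂ) :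
    X * eB m n r m B = eB m n r m B := by
  ext p s
  rw [Matrix.mul_apply]
  have hterm : ∀ q, X p q * eB m n r m B q s
      = if q = p then eB m n r m B p s else 0 := by
    intro q
    by_cases hq : (q.1 : ℕ) = m - 1
    · rw [hcol p q hq, Matrix.one_apply]
      by_cases hqp : q = p
      · subst hqp; simp
      · rw [if_neg fun h => hqp h.symm, if_neg hqp, zero_mul]
    · have hz : eB m n r m B q s = 0 := by rw [eB_apply, if_neg (by omega)]
      rw [hz, mul_zero]
      by_cases hqp : q = p
      · subst hqp; rw [if_pos rfl, hz]
      · rw [if_neg hqp]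
  rw [Finset.sum_congr rfl fun q _ => hterm q]
  simp

lemma eC_mul_row (hm : 2 ≤ m) (X : Matrix (Fin m × Fin n) (Fin m × Fin n) ℂ)
    (hrow : ∀ p q : Fin m × Fin n, (p.1 : ℕ) = m - 1 →
      X p q = (1 : Matrix (Fin m × Fin n) (Fin m × Fin n) ℂ) p q)
    (C : Matrix (Fin r) (Fin n) ℂ) :
    eC m n r m C * X = eC m n r m C := by
  ext s p
  rw [Matrix.mul_apply]
  have hterm : ∀ q, eC m n r m C s q * X q p
      = if q = p then eC m n r m C s p else 0 := by
    intro q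
    by_cases hq : (q.1 : ℕ) = m - 1
    · rw [hrow q p hq, Matrix.one_apply]
      by_cases hqp : q = p
      · subst hqp; simp
      · rw [if_neg hqp, if_neg hqp, mul_zero]
    · have hz : eC m n r m C s q = 0 := by rw [eC_apply, if_neg (by omega)]
      rw [hz, zero_mul]
      by_cases hqp : q = p
      · subst hqp; rw [if_pos rfl, hz]
      · rw [if_neg hqp]
  rw [Finset.sum_congr rfl fun q _ => hterm q]
  simp

lemma eB_ne_zero (hm : 2 ≤ m) (B : Matrix (Fin n) (Fin r) ℂ) (hB : B ≠ 0) :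
    eB m n r m B ≠ 0 := by
  intro h
  apply hB
  ext i s
  have := congrFun (congrFun h (⟨⟨m - 1, by omega⟩, i⟩ : Fin m × Fin n)) s
  simpa [eB_apply, show m - 1 + 1 = m by omega] using this

lemma eC_ne_zero (hm : 2 ≤ m) (C : Matrix (Fin r) (Fin n) ℂ) (hC : C ≠ 0) :
    eC m n r m C ≠ 0 := by
  intro h
  apply hC
  ext s i
  have := congrFun (congrFun h s) (⟨⟨m - 1, by omega⟩, i⟩ : Fin m × Fin n)
  simpa [eC_apply, show m - 1 + 1 = m by omega] using this

end Aux4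


/-- `𝕂_w(λ)` is block tridiagonal iff `K_w(λ)` is block tridiagonal and
`CIP(w0) = (0, 0)`; in that case `𝕂_w(λ) = [[K_w(λ), e_m ⊗ B], [e_m^T ⊗ C, D]]`. -/
theorem stmt7 (m n r : ℕ) (hm : 2 ≤ m) (hn : 1 ≤ n) (hr : 1 ≤ r)
    (A : Fin (m + 1) → Matrix (Fin n) (Fin n) ℂ) (hreg : Regular m n A)
    (B : Matrix (Fin n) (Fin r) ℂ) (C : Matrix (Fin r) (Fin n) ℂ)
    (D : Matrix (Fin r) (Fin r) ℂ) (hB : B ≠ 0) (hC : C ≠ 0)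
    (w0 w1 : List ℕ) (hw : ProperPerm m w0 w1)
    (c0 i0 : ℕ) (hcip : IsCIP w0 c0 i0) :
    ((∀ lam : ℂ, BlockBandS m n r 1 (SKP m n r A B C D w0 w1 lam)) ↔
      ((∀ lam : ℂ, BlockBandP m n 1 (KP m n A w0 w1 lam)) ∧ c0 = 0 ∧ i0 = 0)) ∧
    ((∀ lam : ℂ, BlockBandS m n r 1 (SKP m n r A B C D w0 w1 lam)) →
      ∀ lam : ℂ,
        SKP m n r A B C D w0 w1 lam =
          Matrix.fromBlocks (KP m n A w0 w1 lam) (eB m n r m B) (eC m n r m C) D) := by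
  obtain ⟨hperm, h0w0, hmw1⟩ := hw
  have hnd : (w0 ++ w1).Nodup := hperm.nodup_iff.2 List.nodup_range
  rw [List.nodup_append] at hnd
  obtain ⟨hnd0, hnd1, hdisj⟩ := hnd
  have hmemall : ∀ x : ℕ, x ∈ w0 ∨ x ∈ w1 → x < m + 1 := by
    intro x hx
    have hx2 : x ∈ w0 ++ w1 := List.mem_append.2 hx
    rw [hperm.mem_iff, List.mem_range] at hx2
    exact hx2
  have hw1elts : ∀ i ∈ w1, 1 ≤ i ∧ i ≤ m := by
    intro i hi
    constructor
    · rcases Nat.eq_zero_or_pos i with rfl | h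
      · exact absurd hi (fun h' => hdisj 0 h0w0 0 h' rfl)
      · exact h
    · have := hmemall i (Or.inr hi); omega
  have hmw0 : m ∉ w0 := fun h => hdisj m h m hmw1 rfl
  obtain ⟨L0, R0, hsplit⟩ := List.append_of_mem h0w0
  subst hsplit
  rw [List.nodup_append] at hnd0
  obtain ⟨hndL0, hndR0', hdisj0⟩ := hnd0
  have h0L0 : (0 : ℕ) ∉ L0 := fun h => hdisj0 0 h 0 List.mem_cons_self rfl
  have h0R0 : (0 : ℕ) ∉ R0 := (List.nodup_cons.1 hndR0').1
  have hndR0 : R0.Nodup := (List.nodup_cons.1 hndR0').2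
  have hL0 : ∀ i ∈ L0, 1 ≤ i ∧ i ≤ m - 1 := by
    intro i hi
    have hiw0 : i ∈ L0 ++ 0 :: R0 := List.mem_append.2 (Or.inl hi)
    have h1 : i ≠ 0 := fun h => h0L0 (h ▸ hi)
    have h2 : i ≠ m := fun h => hmw0 (h ▸ hiw0)
    have h3 := hmemall i (Or.inl hiw0)
    omega
  have hR0 : ∀ i ∈ R0, 1 ≤ i ∧ i ≤ m - 1 := by
    intro i hi
    have hiw0 : i ∈ L0 ++ 0 :: R0 := List.mem_append.2 (Or.inr (List.mem_cons_of_mem 0 hi))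
    have h1 : i ≠ 0 := fun h => h0R0 (h ▸ hi)
    have h2 : i ≠ m := fun h => hmw0 (h ▸ hiw0)
    have h3 := hmemall i (Or.inl hiw0)
    omega
  have hSKP : ∀ lam : ℂ, SKP m n r A B C D (L0 ++ 0 :: R0) w1 lam =
      Matrix.fromBlocks (KP m n A (L0 ++ 0 :: R0) w1 lam)
        ((L0.map (FM m n A)).prod * eB m n r m B)
        (eC m n r m C * (R0.map (FM m n A)).prod) D :=
    fun lam => SKP_eq hm A B C D L0 R0 w1 hL0 hR0 hw1elts hmw1 lam
  -- the key step: block tridiagonality forces 1 ∉ w0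
  have key : (∀ lam : ℂ, BlockBandS m n r 1 (SKP m n r A B C D (L0 ++ 0 :: R0) w1 lam)) →
      (1 : ℕ) ∉ L0 ++ 0 :: R0 := by
    intro hS h1mem
    rcases List.mem_append.1 h1mem with h1L | h1cons
    · obtain ⟨P, Q, hPQ⟩ := List.append_of_mem h1L
      have hndL0' := hndL0
      rw [hPQ, List.nodup_append, List.nodup_cons] at hndL0'
      obtain ⟨hndP, ⟨h1Q, hndQ⟩, hdisjPQ⟩ := hndL0'
      have h1P : (1 : ℕ) ∉ P := fun h => hdisjPQ 1 h 1 List.mem_cons_self rfl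
      have hP : ∀ i ∈ P, 2 ≤ i ∧ i ≤ m := by
        intro i hi
        have hb := hL0 i (by rw [hPQ]; exact List.mem_append.2 (Or.inl hi))
        have hne : i ≠ 1 := fun h => h1P (h ▸ hi)
        omega
      have hQ : ∀ i ∈ Q, 2 ≤ i ∧ i ≤ m := by
        intro i hi
        have hb := hL0 i (by
          rw [hPQ]; exact List.mem_append.2 (Or.inr (List.mem_cons_of_mem 1 hi)))
        have hne : i ≠ 1 := fun h => h1Q (h ▸ hi)
        omega
      have hzB : (L0.map (FM m n A)).prod * eB m n r m B = 0 := by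
        ext p s
        rw [Matrix.zero_apply]
        by_cases hpb : (p.1 : ℕ) = m - 1
        · rw [Matrix.mul_apply]
          refine Finset.sum_eq_zero fun q _ => ?_
          by_cases hq : (q.1 : ℕ) = m - 1
          · have hz : (L0.map (FM m n A)).prod p q = 0 := by
              rw [hPQ]; exact prod_key_zero hm A P Q hP hQ hpb hq
            rw [hz, zero_mul]
          · rw [eB_apply, if_neg (by omega), mul_zero]
        · have hb : (p.1 : ℕ) + 1 < m := by have := p.1.isLt; omega
          have h := hS 0 (Sum.inl p) (Sum.inr s) (Or.inl (by simp only [sIdx]; omega))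
          rw [hSKP 0] at h
          simpa using h
      have hunit : IsUnit ((L0.map (FM m n A)).prod) := prod_FM_isUnit hm A L0 hL0
      have hdet := (Matrix.isUnit_iff_isUnit_det _).1 hunit
      have hBz : eB m n r m B = 0 := by
        calc eB m n r m B
            = (((L0.map (FM m n A)).prod)⁻¹ * (L0.map (FM m n A)).prod) * eB m n r m B := by
              rw [Matrix.nonsing_inv_mul _ hdet, Matrix.one_mul]
          _ = ((L0.map (FM m n A)).prod)⁻¹ * ((L0.map (FM m n A)).prod * eB m n r m B) := by
              rw [Matrix.mul_assoc]
          _ = 0 := by rw [hzB, Matrix.mul_zero]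
      exact eB_ne_zero hm B hB hBz
    · rcases List.mem_cons.1 h1cons with h10 | h1R
      · exact one_ne_zero h10
      · obtain ⟨P, Q, hPQ⟩ := List.append_of_mem h1R
        have hndR0'' := hndR0
        rw [hPQ, List.nodup_append, List.nodup_cons] at hndR0''
        obtain ⟨hndP, ⟨h1Q, hndQ⟩, hdisjPQ⟩ := hndR0''
        have h1P : (1 : ℕ) ∉ P := fun h => hdisjPQ 1 h 1 List.mem_cons_self rfl
        have hP : ∀ i ∈ P, 2 ≤ i ∧ i ≤ m := by
          intro i hi
          have hb := hR0 i (by rw [hPQ]; exact List.mem_append.2 (Or.inl hi))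
          have hne : i ≠ 1 := fun h => h1P (h ▸ hi)
          omega
        have hQ : ∀ i ∈ Q, 2 ≤ i ∧ i ≤ m := by
          intro i hi
          have hb := hR0 i (by
            rw [hPQ]; exact List.mem_append.2 (Or.inr (List.mem_cons_of_mem 1 hi)))
          have hne : i ≠ 1 := fun h => h1Q (h ▸ hi)
          omega
        have hzC : eC m n r m C * (R0.map (FM m n A)).prod = 0 := by
          ext s p
          rw [Matrix.zero_apply]
          by_cases hpb : (p.1 : ℕ) = m - 1
          · rw [Matrix.mul_apply]
            refine Finset.sum_eq_zero fun q _ => ?_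
            by_cases hq : (q.1 : ℕ) = m - 1
            · have hz : (R0.map (FM m n A)).prod q p = 0 := by
                rw [hPQ]; exact prod_key_zero hm A P Q hP hQ hq hpb
              rw [hz, mul_zero]
            · rw [eC_apply, if_neg (by omega), zero_mul]
          · have hb : (p.1 : ℕ) + 1 < m := by have := p.1.isLt; omega
            have h := hS 0 (Sum.inr s) (Sum.inl p) (Or.inr (by simp only [sIdx]; omega))
            rw [hSKP 0] at h
            simpa using h
        have hunit : IsUnit ((R0.map (FM m n A)).prod) := prod_FM_isUnit hm A R0 hR0
        have hdet := (Matrix.isUnit_iff_isUnit_det _).1 hunit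
        have hCz : eC m n r m C = 0 := by
          calc eC m n r m C
              = eC m n r m C * ((R0.map (FM m n A)).prod * ((R0.map (FM m n A)).prod)⁻¹) := by
                rw [Matrix.mul_nonsing_inv _ hdet, Matrix.mul_one]
            _ = (eC m n r m C * (R0.map (FM m n A)).prod) * ((R0.map (FM m n A)).prod)⁻¹ := by
                rw [Matrix.mul_assoc]
            _ = 0 := by rw [hzC, Matrix.zero_mul]
        exact eC_ne_zero hm C hC hCz
  -- if 1 ∉ w0 then the corner blocks are exactly eB, eC
  have hfix : (1 : ℕ) ∉ L0 ++ 0 :: R0 →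
      (L0.map (FM m n A)).prod * eB m n r m B = eB m n r m B ∧
      eC m n r m C * (R0.map (FM m n A)).prod = eC m n r m C := by
    intro h1
    have hL0' : ∀ i ∈ L0, 2 ≤ i ∧ i ≤ m := by
      intro i hi
      have hne : i ≠ 1 := fun h => h1 (h ▸ List.mem_append.2 (Or.inl hi))
      have := hL0 i hi; omega
    have hR0' : ∀ i ∈ R0, 2 ≤ i ∧ i ≤ m := by
      intro i hi
      have hne : i ≠ 1 :=
        fun h => h1 (h ▸ List.mem_append.2 (Or.inr (List.mem_cons_of_mem 0 hi)))
      have := hR0 i hi; omega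
    exact ⟨mul_eB_col hm _ (fun p q hq => prod_col_last hm A L0 hL0' p hq) B,
      eC_mul_row hm _ (fun p q hp => prod_row_last hm A R0 hR0' hp q) C⟩
  have hnot1 : ¬ LCons (L0 ++ 0 :: R0) 0 → ¬ LInv (L0 ++ 0 :: R0) 0 →
      (1 : ℕ) ∉ L0 ++ 0 :: R0 := by
    intro hc hi h1
    rcases Nat.lt_trichotomy ((L0 ++ 0 :: R0).idxOf 0) ((L0 ++ 0 :: R0).idxOf 1)
      with h | h | h
    · exact hc ⟨h0w0, h1, h⟩
    · exact zero_ne_one ((List.idxOf_inj h0w0).1 h)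
    · exact hi ⟨h0w0, h1, h⟩
  constructor
  · constructor
    · intro hS
      have h1 := key hS
      refine ⟨?_, ?_, ?_⟩
      · intro lam x y hxy
        have h := hS lam (Sum.inl x) (Sum.inl y) (by simpa [sIdx] using hxy)
        rw [hSKP lam] at h
        simpa using h
      · by_contra hc
        exact h1 ((hcip.1.1 0 (by omega)).2.1)
      · by_contra hc
        exact h1 ((hcip.2.1 0 (by omega)).2.1)
    · rintro ⟨hKP, hc0, hi0⟩
      have h1 : (1 : ℕ) ∉ L0 ++ 0 :: R0 := by
        apply hnot1
        · have := hcip.1.2; rwa [hc0] at this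
        · have := hcip.2.2; rwa [hi0] at this
      obtain ⟨heB, heC⟩ := hfix h1
      intro lam x y hxy
      rw [hSKP lam, heB, heC]
      rcases x with x | x <;> rcases y with y | y
      · simpa using hKP lam x y (by simpa [sIdx] using hxy)
      · simp only [sIdx] at hxy
        have hx : (x.1 : ℕ) + 1 < m := by have := x.1.isLt; omega
        rw [Matrix.fromBlocks_apply₁₂, eB_apply, if_neg (by omega)]
      · simp only [sIdx] at hxy
        have hy : (y.1 : ℕ) + 1 < m := by have := y.1.isLt; omega
        rw [Matrix.fromBlocks_apply₂₁, eC_apply, if_neg (by omega)]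
      · simp only [sIdx] at hxy; omega
  · intro hS lam
    have h1 := key hS
    obtain ⟨heB, heC⟩ := hfix h1
    rw [hSKP lam, heB, heC]


end
end
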